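/- arXiv:2003.08113 — 8 statements merged into one kernel-verified Lean document; each statement's English description precedes it below -/
import Mathlib

section
/- Let T be a small category with finite products, let AlgT be the category of T-algebras, Y : T^op ⥤ AlgT the restricted coYoneda embedding, and C a cocomplete category. If F : T^op ⥤ C preserves finite coproducts, then the assignment C ↦ (t ↦ Hom_C(F t, C)) defines a functor R_F : C ⥤ AlgT (each functor t ↦ Hom_C(F t, C) preserves finite products), and the left Kan extension Lan_Y F : AlgT ⥤ C is left adjoint to R_F. -/
universe u u₂

open CategoryTheory Limits Opposite

/-- The category of `T`-algebras: the full subcategory of `T ⥤ Type u` consisting of the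
finite-product-preserving functors. -/
abbrev AlgCatT (T : Type u) [SmallCategory T] :=
  ObjectProperty.FullSubcategory (fun F : T ⥤ Type u => PreservesFiniteProducts F)

/-- The restricted coYoneda embedding `Tᵒᵖ ⥤ AlgCat T`, sending `t` to `Hom_T(t, -)`. -/
noncomputable def coYon (T : Type u) [SmallCategory T] : Tᵒᵖ ⥤ AlgCatT T :=
  ObjectProperty.lift _ coyoneda (fun _ => inferInstance)

namespace StmtAux

variable {T : Type u} [SmallCategory T] {C : Type u₂} [Category.{u} C]

/-- Underlying functor of `R_F`. -/
abbrev RAlg (F : Tᵒᵖ ⥤ C) : C ⥤ T ⥤ Type u :=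
  yoneda ⋙ (Functor.whiskeringLeft T Cᵒᵖ (Type u)).obj F.rightOp

lemma coYon_obj (t : Tᵒᵖ) : ((coYon T).obj t).obj = coyoneda.obj t := rfl

noncomputable def algHomEquiv' (F : Tᵒᵖ ⥤ C) (G : AlgCatT T) (E : C) :
    (CostructuredArrow.proj (coYon T) G ⋙ F ⟶
        (Functor.const (CostructuredArrow (coYon T) G)).obj E) ≃
      (G.obj ⟶ (RAlg F).obj E) where
  toFun f :=
    { app := fun t => TypeCat.ofHom (fun x => f.app (CostructuredArrow.mk (Y := op t)
        (show (coYon T).obj (op t) ⟶ G from ObjectProperty.homMk (coyonedaEquiv.symm x))))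
      naturality := fun {X₁ X₂} φ => by
        ext x
        let ψ : CostructuredArrow.mk (Y := op X₂)
            (show (coYon T).obj (op X₂) ⟶ G from ObjectProperty.homMk (coyonedaEquiv.symm (G.obj.map φ x))) ⟶
            CostructuredArrow.mk (Y := op X₁)
            (show (coYon T).obj (op X₁) ⟶ G from ObjectProperty.homMk (coyonedaEquiv.symm x)) :=
          CostructuredArrow.homMk φ.op (by
            apply ObjectProperty.hom_ext
            apply coyonedaEquiv.injective
            show coyonedaEquiv (coyoneda.map φ.op ≫ coyonedaEquiv.symm x) = _
            rw [← coyonedaEquiv_naturality]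
            simp
            exact (Equiv.apply_symm_apply _ _).symm)
        have hψ := (f.naturality ψ).symm
        simp at hψ
        exact hψ }
  invFun g :=
    { app := fun p => coyonedaEquiv
        (show coyoneda.obj (op p.left.unop) ⟶ (RAlg F).obj E from p.hom.hom ≫ g)
      naturality := fun {p₁ p₂} φ => by
        dsimp
        erw [Category.comp_id, ← CostructuredArrow.w φ]
        show F.map φ.left ≫ coyonedaEquiv (p₂.hom.hom ≫ g) =
          coyonedaEquiv (coyoneda.map ((φ.left.unop).op) ≫ (p₂.hom.hom ≫ g))
        rw [← coyonedaEquiv_naturality]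
        rfl }
  left_inv f := by
    ext p
    dsimp
    erw [coyonedaEquiv_comp]
    dsimp
    exact congrArg (fun (q : ((coYon T).obj p.left).obj ⟶ G.obj) =>
      show F.obj p.left ⟶ E from f.app (CostructuredArrow.mk (Y := p.left)
        (show (coYon T).obj p.left ⟶ G from ObjectProperty.homMk q))) (coyonedaEquiv.symm_apply_apply p.hom.hom)
  right_inv g := by
    ext t x
    dsimp
    erw [coyonedaEquiv_comp]
    erw [Equiv.apply_symm_apply]

end StmtAux

namespace StmtAux

variable {T : Type u} [SmallCategory T] {C : Type u₂} [Category.{u} C]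
variable (F : Tᵒᵖ ⥤ C) [(coYon T).HasPointwiseLeftKanExtension F]
variable (h : ∀ c : C, PreservesFiniteProducts (F.rightOp ⋙ yoneda.obj c))
variable (L : AlgCatT T ⥤ C) (α : F ⟶ coYon T ⋙ L) [L.IsLeftKanExtension α]

noncomputable def restrictedHomEquiv (G : AlgCatT T) (E : C) :
    (L.obj G ⟶ E) ≃ (G ⟶ (ObjectProperty.lift _ (RAlg F) h).obj E) :=
  (((Functor.isPointwiseLeftKanExtensionOfIsLeftKanExtension _ α G).homEquiv (W := E)).trans
    (algHomEquiv' F G E)).trans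
    (show (G.obj ⟶ (RAlg F).obj E) ≃ (G ⟶ (ObjectProperty.lift _ (RAlg F) h).obj E) from
    { toFun := fun f => ObjectProperty.homMk f, invFun := fun f => f.hom,
      left_inv := fun _ => rfl, right_inv := fun _ => rfl })

noncomputable def coYonAdjunction : L ⊣ ObjectProperty.lift _ (RAlg F) h :=
  Adjunction.mkOfHomEquiv
    { homEquiv := restrictedHomEquiv F h L α
      homEquiv_naturality_left_symm := fun {P Q X} f g => by
        obtain ⟨g, rfl⟩ := (restrictedHomEquiv F h L α Q X).surjective g
        apply (restrictedHomEquiv F h L α P X).injective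
        simp only [Equiv.apply_symm_apply, Equiv.symm_apply_apply]
        apply ObjectProperty.hom_ext
        refine NatTrans.ext (funext fun t => ConcreteCategory.hom_ext _ _ fun x => ?_)
        show (α.app (op t) ≫ L.map (show (coYon T).obj (op t) ⟶ Q from
            ObjectProperty.homMk (coyonedaEquiv.symm (f.hom.app t x)))) ≫ g =
          (α.app (op t) ≫ L.map (show (coYon T).obj (op t) ⟶ P from ObjectProperty.homMk (coyonedaEquiv.symm x))) ≫
            L.map f ≫ g
        simp only [Category.assoc]
        rw [← L.map_comp_assoc]
        congr 3
        apply ObjectProperty.hom_ext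
        apply coyonedaEquiv.injective
        erw [coyonedaEquiv_comp]
        exact (coyonedaEquiv.apply_symm_apply (f.hom.app t x)).trans
          (congrArg (f.hom.app t) (coyonedaEquiv.apply_symm_apply x).symm)
      homEquiv_naturality_right := fun {P X Y} f g => by
        apply (restrictedHomEquiv F h L α P Y).symm.injective
        simp only [Equiv.symm_apply_apply]
        dsimp [restrictedHomEquiv, algHomEquiv', IsColimit.homEquiv]
        apply (Functor.isPointwiseLeftKanExtensionOfIsLeftKanExtension L α P).hom_ext
        intro p
        erw [(Functor.isPointwiseLeftKanExtensionOfIsLeftKanExtension L α P).fac]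
        show (α.app p.left ≫ L.map p.hom) ≫ f ≫ g =
          ((α.app (op p.left.unop) ≫ L.map (show (coYon T).obj (op p.left.unop) ⟶ P from
            ObjectProperty.homMk (coyonedaEquiv.symm (coyonedaEquiv
              (show coyoneda.obj (op p.left.unop) ⟶ P.obj from p.hom.hom))))) ≫ f) ≫ g
        rw [Equiv.symm_apply_apply]
        simp
        rfl }

end StmtAux


/-- Let `T` be a small category with finite products, `C` a cocomplete
category, and `F : Tᵒᵖ ⥤ C` a finite-coproduct-preserving functor.  Then each functor
`t ↦ Hom_C (F t, c)` preserves finite products, so that `c ↦ (t ↦ Hom_C (F t, c))` defines a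
functor `R_F : C ⥤ AlgCat T`, and the left Kan extension of `F` along the restricted coYoneda
embedding `Y : Tᵒᵖ ⥤ AlgCat T` is left adjoint to `R_F`. -/
theorem stmt_1 (T : Type u) [SmallCategory T] [HasFiniteProducts T]
    {C : Type u₂} [Category.{u} C] [HasColimits C]
    (F : Tᵒᵖ ⥤ C) [PreservesFiniteCoproducts F] :
    ∃ h : ∀ c : C, PreservesFiniteProducts (F.rightOp ⋙ yoneda.obj c),
      ∃ (Lan : AlgCatT T ⥤ C) (α : F ⟶ coYon T ⋙ Lan),
        Lan.IsLeftKanExtension α ∧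
        Nonempty (Lan ⊣ ObjectProperty.lift _
          (yoneda ⋙ (Functor.whiskeringLeft T Cᵒᵖ (Type u)).obj F.rightOp) h) := by
  have h : ∀ c : C, PreservesFiniteProducts (F.rightOp ⋙ yoneda.obj c) := fun c => by
    have := preservesFiniteProducts_rightOp F
    infer_instance
  refine ⟨h, (coYon T).leftKanExtension F, (coYon T).leftKanExtensionUnit F, ?_, ?_⟩
  · infer_instance
  · exact ⟨StmtAux.coYonAdjunction F h _ ((coYon T).leftKanExtensionUnit F)⟩
end

section
/- Let T be a small category with finite products, AlgT the category of T-algebras, Y : T^op ⥤ AlgT the restricted coYoneda embedding, and C a cocomplete category. Precomposition with Y defines an equivalence of categories from the full subcategory of the functor category AlgT ⥤ C spanned by the functors preserving all small colimits onto the category Coalg(T, C) of internal T-coalgebras in C. -/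
universe u u₂

open CategoryTheory Limits Opposite

namespace Stmt2Aux

variable {T : Type u} [SmallCategory T]

instance : (coYon T).Faithful :=
  show (ObjectProperty.lift _ coyoneda _).Faithful from inferInstance

instance : (coYon T).Full :=
  show (ObjectProperty.lift _ coyoneda _).Full from inferInstance

/-- The underlying presheaf morphism of a morphism of algebras. -/
def toP {F G : AlgCatT T} (f : F ⟶ G) : F.obj ⟶ G.obj := f.hom

/-- A morphism of algebras from a morphism of presheaves. -/
def toA {F G : AlgCatT T} (f : F.obj ⟶ G.obj) : F ⟶ G := ObjectProperty.homMk f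

/-- The coYoneda lemma for algebras. -/
noncomputable def yEquiv {t : Tᵒᵖ} {F : AlgCatT T} : ((coYon T).obj t ⟶ F) ≃ F.obj.obj t.unop :=
  Equiv.trans ⟨fun f => f.hom, ObjectProperty.homMk, fun _ => rfl, fun _ => rfl⟩ coyonedaEquiv

lemma yEquiv_symm_map {X Y : T} (f : X ⟶ Y) {F : AlgCatT T} (x : F.obj.obj X) :
    (yEquiv (t := op Y)).symm (F.obj.map f x) =
      (coYon T).map f.op ≫ (yEquiv (t := op X)).symm x :=
  ObjectProperty.hom_ext _ (coyonedaEquiv_symm_map f x)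

lemma yEquiv_naturality {X Y : T} {F : AlgCatT T} (f : (coYon T).obj (op X) ⟶ F)
    (g : X ⟶ Y) : F.obj.map g (yEquiv f) = yEquiv ((coYon T).map g.op ≫ f) :=
  coyonedaEquiv_naturality f.hom g

lemma yEquiv_naturality' {t t' : Tᵒᵖ} {F : AlgCatT T} (f : (coYon T).obj t' ⟶ F)
    (g : t ⟶ t') : yEquiv ((coYon T).map g ≫ f) = F.obj.map g.unop (yEquiv f) :=
  (coyonedaEquiv_naturality f.hom g.unop).symm

lemma yEquiv_comp {t : Tᵒᵖ} {F G : AlgCatT T} (α : (coYon T).obj t ⟶ F) (β : F ⟶ G) :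
    yEquiv (α ≫ β) = (toP β).app _ (yEquiv α) :=
  coyonedaEquiv_comp α.hom (toP β)

lemma yEquiv_symm_comp {X : T} {P Q : AlgCatT T} (x : P.obj.obj X) (f : P ⟶ Q) :
    (yEquiv (t := op X)).symm ((toP f).app X x) = (yEquiv (t := op X)).symm x ≫ f := by
  apply yEquiv.injective
  rw [Equiv.apply_symm_apply, yEquiv_comp, Equiv.apply_symm_apply]

/-! ### Density: every algebra is a colimit of corepresentables -/

/-- The tautological cocone exhibiting an algebra as a colimit of corepresentables. -/
@[simps]
noncomputable def tautCocone (F : AlgCatT T) :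
    Cocone (CostructuredArrow.proj (coYon T) F ⋙ coYon T) where
  pt := F
  ι := { app := fun X => X.hom
         naturality := fun X Y f => (CostructuredArrow.w f).trans (Category.comp_id _).symm }

/-- The descent morphism out of an algebra. -/
noncomputable def descApp (F : AlgCatT T)
    (s : Cocone (CostructuredArrow.proj (coYon T) F ⋙ coYon T)) : F ⟶ s.pt :=
  ObjectProperty.homMk
  { app := fun X => TypeCat.ofHom fun t =>
      yEquiv (s.ι.app (CostructuredArrow.mk ((yEquiv (t := op X)).symm t)))
    naturality := by
      intro X Y f
      ext t
      show yEquiv (s.ι.app (CostructuredArrow.mk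
          ((yEquiv (t := op Y)).symm (F.obj.map f t)))) =
        s.pt.obj.map f (yEquiv (s.ι.app (CostructuredArrow.mk ((yEquiv (t := op X)).symm t))))
      erw [yEquiv_naturality, yEquiv_symm_map]
      exact congr_arg yEquiv (s.ι.naturality
        (CostructuredArrow.homMk' (CostructuredArrow.mk
          ((yEquiv (t := op X)).symm t)) f.op)).symm }

/-- The tautological cocone is a colimit: the density theorem in `AlgCatT T`. -/
noncomputable def isColimitTautCocone (F : AlgCatT T) : IsColimit (tautCocone F) where
  desc := descApp F
  fac := by
    intro s j
    apply yEquiv.injective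
    erw [yEquiv_comp]
    show yEquiv (s.ι.app (CostructuredArrow.mk
      ((yEquiv (t := op j.left.unop)).symm (yEquiv j.hom)))) = yEquiv (s.ι.app j)
    rw [Equiv.symm_apply_apply]
    rfl
  uniq := by
    intro s m hm
    ext X t
    have := congr_arg yEquiv (hm (CostructuredArrow.mk ((yEquiv (t := op X)).symm t)))
    rw [yEquiv_comp] at this
    erw [Equiv.apply_symm_apply] at this
    exact this

/-! ### The corepresentables are closed under finite coproducts in `AlgCatT T` -/

/-- Sections of a functor on the opposite of a discrete category are just families. -/
def sectionsEquivPi {K : Type} (H : (Discrete K)ᵒᵖ ⥤ Type u) :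
    H.sections ≃ ∀ k, H.obj (op ⟨k⟩) where
  toFun s k := s.1 (op ⟨k⟩)
  invFun x := ⟨fun k => x k.unop.as, by
    intro k k' f
    obtain ⟨⟨ka⟩⟩ := k
    obtain ⟨⟨kb⟩⟩ := k'
    obtain rfl : ka = kb := (Discrete.eq_of_hom f.unop).symm
    have hf : f = 𝟙 _ := Quiver.Hom.unop_inj (Subsingleton.elim _ _)
    rw [hf]
    simp⟩
  left_inv s := by
    apply Subtype.ext
    funext k
    rcases k with ⟨⟨ka⟩⟩
    rfl
  right_inv x := rfl

/-- `coYon` sends finite products in `T` to finite coproducts in `AlgCatT T`. -/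
noncomputable def coYonMapCoconeColimit {J : Type} [Fintype J] (D : Discrete J ⥤ Tᵒᵖ)
    (c : Cocone D) (hc : IsColimit c) : IsColimit ((coYon T).mapCocone c) := by
  have hl : IsLimit (coneLeftOpOfCocone c) := isLimitConeLeftOpOfCocone D hc
  have inst : ∀ P : AlgCatT T, PreservesLimitsOfShape (Discrete J)ᵒᵖ P.obj := fun P => by
    have := P.property
    exact preservesLimitsOfShape_of_equiv (Discrete.opposite J).symm _
  let E0 : ∀ P : AlgCatT T, P.obj.obj (unop c.pt) ≃ ∀ j : J, P.obj.obj (unop (D.obj ⟨j⟩)) :=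
    fun P => (Types.isLimitEquivSections (isLimitOfPreserves P.obj hl)).trans
      (sectionsEquivPi _)
  have E0_apply : ∀ (P : AlgCatT T) (x : P.obj.obj (unop c.pt)) (j : J),
      E0 P x j = P.obj.map (c.ι.app ⟨j⟩).unop x := by
    intro P x j
    have h := Types.isLimitEquivSections_apply (isLimitOfPreserves P.obj hl) (op ⟨j⟩) x
    exact h
  exact
    { desc := fun s => (yEquiv (t := c.pt) (F := s.pt)).symm
        ((E0 s.pt).symm (fun j => yEquiv (s.ι.app ⟨j⟩)))
      fac := by
        rintro s ⟨j⟩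
        apply yEquiv.injective
        refine (yEquiv_naturality' (F := s.pt) ((yEquiv (t := c.pt) (F := s.pt)).symm
          ((E0 s.pt).symm (fun i => yEquiv (s.ι.app ⟨i⟩)))) (c.ι.app ⟨j⟩)).trans ?_
        rw [Equiv.apply_symm_apply, ← E0_apply, Equiv.apply_symm_apply]
      uniq := by
        intro s m hm
        apply yEquiv.injective
        refine Eq.trans ?_ (Equiv.apply_symm_apply _ _).symm
        apply (E0 s.pt).injective
        rw [Equiv.apply_symm_apply]
        funext j
        refine (E0_apply s.pt (yEquiv m) j).trans ?_
        refine Eq.trans (yEquiv_naturality' (F := s.pt) m (c.ι.app ⟨j⟩)).symm ?_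
        exact congr_arg yEquiv (hm ⟨j⟩) }

section

variable {C : Type u₂} [Category.{u} C]

omit [SmallCategory T] in
lemma preservesFinCoprod' [SmallCategory T] (L : AlgCatT T ⥤ C)
    [PreservesColimits L] : PreservesFiniteCoproducts (coYon T ⋙ L) := by
  constructor
  intro J
  constructor
  intro D
  constructor
  intro c hc
  constructor
  apply IsColimit.ofIsoColimit (isColimitOfPreserves L (coYonMapCoconeColimit D c hc))
  exact Cocones.ext (Iso.refl _) (by intro j; simp)

/-! ### Colimit-preserving functors are Kan extended from `Tᵒᵖ` -/

lemma isLKE_of_preservesColimits (L : AlgCatT T ⥤ C) [PreservesColimits L] :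
    L.IsLeftKanExtension (𝟙 (coYon T ⋙ L)) := by
  apply Functor.LeftExtension.IsPointwiseLeftKanExtension.isLeftKanExtension
    (E := Functor.LeftExtension.mk _ (𝟙 (coYon T ⋙ L)))
  intro F
  apply IsColimit.ofIsoColimit (isColimitOfPreserves L (isColimitTautCocone F))
  exact Cocones.ext (Iso.refl _) (by intro j; simp [tautCocone]; exact (Category.comp_id _).trans (Category.id_comp _).symm)

/-! ### The adjunction -/

lemma preservesFinProd_rightOp (A : Tᵒᵖ ⥤ C) [PreservesFiniteCoproducts A] :
    PreservesFiniteProducts A.rightOp := by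
  constructor
  intro J
  have : PreservesColimitsOfShape (Discrete (Fin J))ᵒᵖ A :=
    preservesColimitsOfShape_of_equiv (Discrete.opposite (Fin J)).symm A
  exact preservesLimitsOfShape_rightOp _ _

/-- The restricted coYoneda functor associated to a finite-coproduct-preserving functor. -/
noncomputable def restrictedCoYon (A : Tᵒᵖ ⥤ C) [PreservesFiniteCoproducts A] :
    C ⥤ AlgCatT T :=
  ObjectProperty.lift _ (yoneda ⋙ (Functor.whiskeringLeft T Cᵒᵖ (Type u)).obj A.rightOp)
    (fun c => by
      have := preservesFinProd_rightOp (T := T) A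
      dsimp
      constructor
      intro J
      infer_instance)

variable (A : Tᵒᵖ ⥤ C) [PreservesFiniteCoproducts A]

/-- Auxiliary hom equivalence, analogue of `Presheaf.restrictedYonedaHomEquiv'`. -/
noncomputable def rcyHomEquiv' (F : AlgCatT T) (E : C) :
    (CostructuredArrow.proj (coYon T) F ⋙ A ⟶
      (Functor.const (CostructuredArrow (coYon T) F)).obj E) ≃
      (F ⟶ (restrictedCoYon A).obj E) where
  toFun f := toA
    { app := fun X => TypeCat.ofHom fun (x : F.obj.obj X) =>
        f.app (CostructuredArrow.mk ((yEquiv (t := op X)).symm x))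
      naturality := by
        intro X X' φ
        ext x
        show f.app (CostructuredArrow.mk ((yEquiv (t := op X')).symm (F.obj.map φ x))) =
          A.map φ.op ≫ f.app (CostructuredArrow.mk ((yEquiv (t := op X)).symm x))
        rw [yEquiv_symm_map]
        have hnat := (f.naturality
          (CostructuredArrow.homMk' (CostructuredArrow.mk
            ((yEquiv (t := op X)).symm x)) φ.op)).symm
        simp at hnat
        exact hnat }
  invFun g :=
    { app := fun X => (toP g).app X.left.unop (yEquiv X.hom)
      naturality := by
        intro X X' ψ
        dsimp
        erw [Category.comp_id]
        have h1 : yEquiv X.hom = F.obj.map ψ.left.unop (yEquiv X'.hom) := by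
          rw [yEquiv_naturality]
          congr 1
          simpa using (CostructuredArrow.w ψ).symm
        have h2 := ConcreteCategory.congr_hom ((toP g).naturality ψ.left.unop) (yEquiv (T := T) (F := F) X'.hom)
        dsimp at h2
        exact h2.symm.trans (congrArg _ h1.symm) }
  left_inv f := by
    ext ⟨X₀, ⟨⟨⟩⟩, φ⟩
    show f.app (CostructuredArrow.mk
      ((yEquiv (t := op X₀.unop)).symm (yEquiv φ))) = _
    rw [Equiv.symm_apply_apply]
    rfl
  right_inv g := by
    apply congr_arg toA
    ext X x
    show (toP g).app X (yEquiv ((yEquiv (t := op X)).symm x)) = g.hom.app X x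
    rw [Equiv.apply_symm_apply]
    rfl

variable [HasColimits C]

noncomputable def rcyHomEquiv (L : AlgCatT T ⥤ C) (α : A ⟶ coYon T ⋙ L)
    [L.IsLeftKanExtension α] (F : AlgCatT T) (E : C) :
    (L.obj F ⟶ E) ≃ (F ⟶ (restrictedCoYon A).obj E) :=
  ((Functor.isPointwiseLeftKanExtensionOfIsLeftKanExtension L α F).homEquiv (W := E)).trans
    (rcyHomEquiv' A F E)

lemma rcyHomEquiv_apply (L : AlgCatT T ⥤ C) (α : A ⟶ coYon T ⋙ L)
    [L.IsLeftKanExtension α] (F : AlgCatT T) (E : C) (f : L.obj F ⟶ E) (X : T)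
    (x : F.obj.obj X) :
    (toP (rcyHomEquiv A L α F E f)).app X x =
      (α.app (op X) ≫ L.map ((yEquiv (t := op X)).symm x)) ≫ f :=
  rfl

/-- The analogue of `Presheaf.yonedaAdjunction`. -/
noncomputable def coYonAdjunction (L : AlgCatT T ⥤ C) (α : A ⟶ coYon T ⋙ L)
    [L.IsLeftKanExtension α] : L ⊣ restrictedCoYon A :=
  Adjunction.mkOfHomEquiv
    { homEquiv := rcyHomEquiv A L α
      homEquiv_naturality_left_symm := by
        intro P Q E f g
        apply (rcyHomEquiv A L α P E).injective
        rw [Equiv.apply_symm_apply]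
        apply ObjectProperty.hom_ext
        show toP (f ≫ g) =
          toP (rcyHomEquiv A L α P E (L.map f ≫ (rcyHomEquiv A L α Q E).symm g))
        ext X x
        refine Eq.trans ?_ (rcyHomEquiv_apply A L α P E
          (L.map f ≫ (rcyHomEquiv A L α Q E).symm g) X x).symm
        calc (show @Quiver.Hom C CategoryStruct.toQuiver (A.obj (op X)) E from (toP (f ≫ g)).app X x)
            = (show @Quiver.Hom C CategoryStruct.toQuiver (A.obj (op X)) E from
                (toP (rcyHomEquiv A L α Q E ((rcyHomEquiv A L α Q E).symm g))).app X
                ((toP f).app X x)) := by rw [Equiv.apply_symm_apply]; rfl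
          _ = (α.app (op X) ≫ L.map ((yEquiv (t := op X)).symm ((toP f).app X x))) ≫
                (rcyHomEquiv A L α Q E).symm g := rcyHomEquiv_apply A L α Q E _ X _
          _ = (α.app (op X) ≫ L.map ((yEquiv (t := op X)).symm x ≫ f)) ≫
                (rcyHomEquiv A L α Q E).symm g := by rw [yEquiv_symm_comp]
          _ = (α.app (op X) ≫ L.map ((yEquiv (t := op X)).symm x)) ≫ L.map f ≫
                (rcyHomEquiv A L α Q E).symm g := by
              rw [Functor.map_comp]
              simp only [Category.assoc]
      homEquiv_naturality_right := by
        intro F E E' f g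
        apply ObjectProperty.hom_ext
        show toP (rcyHomEquiv A L α F E' (f ≫ g)) =
          toP (rcyHomEquiv A L α F E f ≫ (restrictedCoYon A).map g)
        ext X x
        refine (rcyHomEquiv_apply A L α F E' (f ≫ g) X x).trans ?_
        exact (Category.assoc _ _ _).symm }

noncomputable instance : PreservesColimits ((coYon T).leftKanExtension A) :=
  (coYonAdjunction A _ ((coYon T).leftKanExtensionUnit A)).leftAdjoint_preservesColimits

instance : IsIso ((coYon T).leftKanExtensionUnit A) :=
  (Functor.isPointwiseLeftKanExtensionOfIsLeftKanExtension _
    ((coYon T).leftKanExtensionUnit A)).isIso_hom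

end

variable {C : Type u₂} [Category.{u} C]

lemma whiskerLeft_bijective (L L' : AlgCatT T ⥤ C) [PreservesColimits L] :
    Function.Bijective (fun f : L ⟶ L' => Functor.whiskerLeft (coYon T) f) := by
  have : L.IsLeftKanExtension (𝟙 (coYon T ⋙ L)) := isLKE_of_preservesColimits L
  have heq : (fun f : L ⟶ L' => Functor.whiskerLeft (coYon T) f) =
      L.homEquivOfIsLeftKanExtension (𝟙 (coYon T ⋙ L)) L' := by
    funext f
    show Functor.whiskerLeft (coYon T) f = 𝟙 (coYon T ⋙ L) ≫ Functor.whiskerLeft (coYon T) f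
    rw [Category.id_comp]
  rw [heq]
  exact (L.homEquivOfIsLeftKanExtension (𝟙 (coYon T ⋙ L)) L').bijective

end Stmt2Aux

open Stmt2Aux in
/-- For a small category `T` with finite products and a cocomplete
category `C`, precomposition with the restricted coYoneda embedding `Y : Tᵒᵖ ⥤ AlgCatT T`
defines an equivalence from the full subcategory of `AlgCatT T ⥤ C` spanned by the functors
preserving all small colimits onto the category `Coalg (T, C)` of internal `T`-coalgebras
in `C`, i.e. the full subcategory of `Tᵒᵖ ⥤ C` of finite-coproduct-preserving functors. -/
theorem stmt_2 (T : Type u) [SmallCategory T] [HasFiniteProducts T]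
    (C : Type u₂) [Category.{u} C] [HasColimits C] :
    ∃ h : ∀ L : ObjectProperty.FullSubcategory (fun L : AlgCatT T ⥤ C => PreservesColimits L),
        PreservesFiniteCoproducts (coYon T ⋙ L.obj),
      (ObjectProperty.lift (fun A : Tᵒᵖ ⥤ C => PreservesFiniteCoproducts A)
        (ObjectProperty.ι _ ⋙
          (Functor.whiskeringLeft Tᵒᵖ (AlgCatT T) C).obj (coYon T)) h).IsEquivalence := by
  have h : ∀ L : ObjectProperty.FullSubcategory (fun L : AlgCatT T ⥤ C => PreservesColimits L),
      PreservesFiniteCoproducts (coYon T ⋙ L.obj) := fun L => by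
    have := L.property
    exact preservesFinCoprod' L.obj
  refine ⟨h, ?_⟩
  set Φ := ObjectProperty.lift (fun A : Tᵒᵖ ⥤ C => PreservesFiniteCoproducts A)
      (ObjectProperty.ι _ ⋙
        (Functor.whiskeringLeft Tᵒᵖ (AlgCatT T) C).obj (coYon T)) h with hΦ
  have hfaithful : Φ.Faithful := by
    constructor
    intro L L' f g hfg
    have := L.property
    apply ObjectProperty.hom_ext
    apply (whiskerLeft_bijective L.obj L'.obj).injective
    have h' := congr_arg InducedCategory.Hom.hom hfg
    exact h'
  have hfull : Φ.Full := by
    constructor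
    intro L L' p
    have := L.property
    obtain ⟨f, hf⟩ := (whiskerLeft_bijective L.obj L'.obj).surjective p.hom
    exact ⟨ObjectProperty.homMk f, ObjectProperty.hom_ext _ hf⟩
  have hessSurj : Φ.EssSurj := by
    constructor
    intro A
    have hA := A.property
    refine ⟨⟨(coYon T).leftKanExtension A.obj, inferInstance⟩, ⟨?_⟩⟩
    exact (ObjectProperty.ι _).preimageIso
      ((asIso ((coYon T).leftKanExtensionUnit A.obj)).symm)
  exact { }
end

section
/- Let T be a small category with finite products, AlgT the category of T-algebras, Y : T^op ⥤ AlgT the restricted coYoneda embedding, and C a cocomplete category. Every functor L : AlgT ⥤ C that preserves all small colimits is naturally isomorphic to the left Kan extension along Y of its restriction Y ⋙ L : T^op ⥤ C. -/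
universe u u₂

open CategoryTheory Limits Opposite

namespace Stmt3Aux

variable {T : Type u} [SmallCategory T]

/-- The tautological cocone exhibiting an algebra `A` as a colimit of representables. -/
@[simps]
noncomputable def tautCocone (A : AlgCatT T) :
    Cocone (CostructuredArrow.proj (coYon T) A ⋙ coYon T) where
  pt := A
  ι :=
    { app := fun g => g.hom
      naturality := fun g₁ g₂ φ => by exact (CostructuredArrow.w φ).trans (Category.comp_id _).symm }

/-- The image of the tautological cocone under the inclusion into `T ⥤ Type u` is colimiting. -/
noncomputable def isColimitMapTautCocone (A : AlgCatT T) :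
    IsColimit ((ObjectProperty.ι _).mapCocone (tautCocone A)) where
  desc := fun s => by
    refine ⟨fun X => TypeCat.ofHom (fun t => coyonedaEquiv (s.ι.app (CostructuredArrow.mk
      (show (coYon T).obj (op X) ⟶ A from ObjectProperty.homMk (coyonedaEquiv.symm t))))), ?_⟩
    intro X Y f
    ext t
    dsimp
    erw [coyonedaEquiv_naturality, coyonedaEquiv_symm_map]
    exact congr_arg coyonedaEquiv (s.ι.naturality
      (CostructuredArrow.homMk' (S := coYon T) (CostructuredArrow.mk
        (show (coYon T).obj (op X) ⟶ A from ObjectProperty.homMk (coyonedaEquiv.symm t))) f.op)).symm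
  fac := by
    intro s g
    apply coyonedaEquiv.injective
    erw [coyonedaEquiv_comp]
    dsimp
    erw [Equiv.symm_apply_apply]
    rfl
  uniq := by
    intro s m h
    ext X x
    obtain ⟨t, rfl⟩ := coyonedaEquiv.surjective x
    dsimp
    erw [Equiv.symm_apply_apply, ← coyonedaEquiv_comp]
    exact congr_arg _ (h (CostructuredArrow.mk
      (show (coYon T).obj (op X) ⟶ A from ObjectProperty.homMk t)))

/-- The tautological cocone is colimiting in `AlgCatT T`. -/
noncomputable def isColimitTautCocone (A : AlgCatT T) : IsColimit (tautCocone A) :=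
  haveI := fullyFaithful_reflectsColimits
    (ObjectProperty.ι (fun F : T ⥤ Type u => PreservesFiniteProducts F))
  isColimitOfReflects (ObjectProperty.ι _) (isColimitMapTautCocone A)

/-- Any colimit-preserving functor out of `AlgCatT T` is a pointwise left Kan extension of its
restriction along the restricted coYoneda embedding. -/
noncomputable def isPointwise {C : Type u₂} [Category.{u} C]
    (L : AlgCatT T ⥤ C) [PreservesColimits L] :
    (Functor.LeftExtension.mk L (𝟙 (coYon T ⋙ L))).IsPointwiseLeftKanExtension :=
  fun A =>
    (isColimitOfPreserves L (isColimitTautCocone A)).ofIsoColimit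
      (Cocones.ext (Iso.refl _) (fun g => by
        dsimp [tautCocone]
        simp
        exact (Category.comp_id _).trans (Category.id_comp _).symm))

end Stmt3Aux

/-- Let `T` be a small category with finite products, `C` a cocomplete
category, and `Y : Tᵒᵖ ⥤ AlgCatT T` the restricted coYoneda embedding.  Every functor
`L : AlgCatT T ⥤ C` preserving all small colimits is naturally isomorphic to the left Kan
extension along `Y` of its restriction `Y ⋙ L : Tᵒᵖ ⥤ C`; in particular this left Kan
extension exists. -/
theorem stmt_3 (T : Type u) [SmallCategory T] [HasFiniteProducts T]
    {C : Type u₂} [Category.{u} C] [HasColimits C]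
    (L : AlgCatT T ⥤ C) [PreservesColimits L] :
    Functor.HasLeftKanExtension (coYon T) (coYon T ⋙ L) ∧
    ∀ (Lan : AlgCatT T ⥤ C) (α : coYon T ⋙ L ⟶ coYon T ⋙ Lan),
      Lan.IsLeftKanExtension α → Nonempty (L ≅ Lan) := by
  have h := Stmt3Aux.isPointwise L
  have h1 : L.IsLeftKanExtension (𝟙 (coYon T ⋙ L)) := h.isLeftKanExtension
  refine ⟨h.hasLeftKanExtension, fun Lan α hα =>
    ⟨Functor.leftKanExtensionUnique L (𝟙 (coYon T ⋙ L)) Lan α⟩⟩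
end

section
/- Let C be a cocomplete category, M a monad on the category of types, and H : C ⥤ M-Alg a functor into the Eilenberg–Moore category of M such that the composite of H with the forgetful functor M-Alg ⥤ Type is corepresentable, i.e. naturally isomorphic to Hom_C(A, −) for some object A of C. Then H has a left adjoint. -/
universe u u₂

open CategoryTheory Limits Opposite

noncomputable def copowerFunctor {C : Type u₂} [Category.{u} C] [HasColimits C] (A : C) :
    Type u ⥤ C where
  obj X := ∐ fun (_ : X) => A
  map f := Sigma.desc fun x => Sigma.ι (fun (_ : _) => A) (f x)

noncomputable def copowerAdj {C : Type u₂} [Category.{u} C] [HasColimits C] (A : C) :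
    copowerFunctor A ⊣ coyoneda.obj (op A) :=
  Adjunction.mkOfHomEquiv
    { homEquiv := fun X Y =>
        { toFun := fun g => TypeCat.ofHom fun x => Sigma.ι (fun (_ : X) => A) x ≫ g
          invFun := fun f => Sigma.desc f
          left_inv := fun g => by dsimp [copowerFunctor]; ext; simp
          right_inv := fun f => by ext; simp }
      homEquiv_naturality_left_symm := fun f g => by dsimp [copowerFunctor]; ext; rw [← Category.assoc, Sigma.ι_desc]; exact (Sigma.ι_desc _ _).trans (Sigma.ι_desc (fun x => g x) _).symm
      homEquiv_naturality_right := fun f g => by ext; exact (Category.assoc _ _ _).symm }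

/-- Let `C` be a cocomplete category, `M` a monad on the category of types,
and `H : C ⥤ M.Algebra` a functor into the Eilenberg–Moore category of `M` such that the
composite of `H` with the forgetful functor `M.Algebra ⥤ Type` is corepresentable, i.e.
naturally isomorphic to `Hom_C (A, -)` for some object `A` of `C`.  Then `H` has a left
adjoint. -/
theorem stmt_4 {C : Type u₂} [Category.{u} C] [HasColimits C]
    (M : Monad (Type u)) (H : C ⥤ M.Algebra)
    (h : ∃ A : C, Nonempty (H ⋙ M.forget ≅ coyoneda.obj (op A))) :
    H.IsRightAdjoint := by
  obtain ⟨A, ⟨e⟩⟩ := h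
  have : (H ⋙ M.forget).IsRightAdjoint :=
    (((copowerAdj A).ofNatIsoRight e.symm)).isRightAdjoint
  exact isRightAdjoint_triangle_lift_monadic M.forget
end

section
/- Let R and S be (not necessarily commutative) rings. The functor that sends a colimit-preserving functor L : ModuleCat R ⥤ ModuleCat S to the left S-module L(R) equipped with the right R-action in which r ∈ R acts as L(ρ_r), where ρ_r : R → R, x ↦ x·r, is the left-R-linear right-multiplication map, defines an equivalence of categories from the full subcategory of the functor category ModuleCat R ⥤ ModuleCat S spanned by the functors preserving all small colimits onto the category of (S,R)-bimodules (generalized Eilenberg–Watts theorem). -/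
universe u

open CategoryTheory Limits

variable (S R : Type u) [Ring S] [Ring R]

/-- An `(S,R)`-bimodule: a left `S`-module `M` together with a right `R`-action by `S`-linear
endomorphisms, i.e. a ring homomorphism `Rᵐᵒᵖ →+* Module.End S M`. -/
structure BimodObj : Type (u + 1) where
  M : ModuleCat.{u} S
  ρ : Rᵐᵒᵖ →+* Module.End S M

variable {S R}

/-- A homomorphism of `(S,R)`-bimodules: an `S`-linear map commuting with the right
`R`-actions. -/
@[ext]
structure BimodHom (X Y : BimodObj S R) where
  f : X.M ⟶ Y.M
  comm : ∀ (r : Rᵐᵒᵖ) (x : X.M), f (X.ρ r x) = Y.ρ r (f x)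

instance : Category (BimodObj S R) where
  Hom := BimodHom
  id X := { f := 𝟙 X.M, comm := fun r x => rfl }
  comp {X Y Z} u v :=
    { f := u.f ≫ v.f
      comm := fun r x => by
        change v.f (u.f (X.ρ r x)) = Z.ρ r (v.f (u.f x))
        rw [u.comm, v.comm] }
  id_comp u := BimodHom.ext (Category.id_comp u.f)
  comp_id u := BimodHom.ext (Category.comp_id u.f)
  assoc u v w := BimodHom.ext (Category.assoc u.f v.f w.f)

variable (R)

/-- Right multiplication by `r` on `R`, as a morphism of left `R`-modules. -/
def rmulHom (r : R) : ModuleCat.of R R ⟶ ModuleCat.of R R :=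
  ModuleCat.ofHom
    { toFun := fun x => x * r
      map_add' := fun x y => add_mul x y r
      map_smul' := fun m x => by simp [smul_eq_mul, mul_assoc] }

variable (S) {R}

/-- The bimodule `L(R)` associated to an additive functor `L : ModuleCat R ⥤ ModuleCat S`:
the underlying left `S`-module is `L(R)` and `r : R` acts on the right as `L` applied to right
multiplication by `r`. -/
def wattsObj (L : ModuleCat.{u} R ⥤ ModuleCat.{u} S) (h : L.Additive) : BimodObj S R where
  M := L.obj (ModuleCat.of R R)
  ρ :=
    { toFun := fun r => (L.map (rmulHom R r.unop)).hom
      map_one' := by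
        try dsimp only
        have e : rmulHom R ((1 : Rᵐᵒᵖ).unop) = 𝟙 (ModuleCat.of R R) :=
          ModuleCat.hom_ext (LinearMap.ext fun x : R => mul_one x)
        rw [e, L.map_id]; rfl
      map_mul' := fun r r' => by
        try dsimp only
        have e : rmulHom R (r * r').unop = rmulHom R r'.unop ≫ rmulHom R r.unop :=
          ModuleCat.hom_ext (LinearMap.ext fun x : R => (mul_assoc x r'.unop r.unop).symm)
        rw [e, L.map_comp]; rfl
      map_zero' := by
        letI := h
        try dsimp only
        have e : rmulHom R ((0 : Rᵐᵒᵖ).unop) = 0 :=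
          ModuleCat.hom_ext (LinearMap.ext fun x : R => mul_zero x)
        rw [e, L.map_zero, ModuleCat.hom_zero]
      map_add' := fun r r' => by
        letI := h
        try dsimp only
        have e : rmulHom R (r + r').unop = rmulHom R r.unop + rmulHom R r'.unop :=
          ModuleCat.hom_ext (LinearMap.ext fun x : R => mul_add x r.unop r'.unop)
        rw [e, L.map_add, ModuleCat.hom_add] }

/-- The full subcategory of functors `ModuleCat R ⥤ ModuleCat S` preserving all small
colimits. -/
abbrev WattsDom (S R : Type u) [Ring S] [Ring R] :=
  ObjectProperty.FullSubcategory (fun L : ModuleCat.{u} R ⥤ ModuleCat.{u} S => PreservesColimits L)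

/-- The Eilenberg–Watts functor, sending a colimit-preserving functor
`L : ModuleCat R ⥤ ModuleCat S` to the `(S,R)`-bimodule `L(R)`. -/
def wattsFunctor (hadd : ∀ L : WattsDom S R, L.obj.Additive) :
    WattsDom S R ⥤ BimodObj S R where
  obj L := wattsObj S L.obj (hadd L)
  map {L L'} η :=
    { f := η.hom.app (ModuleCat.of R R)
      comm := fun r x => by
        have h := η.hom.naturality (rmulHom R r.unop)
        exact congrArg
          (fun g : L.obj.obj (ModuleCat.of R R) ⟶ L'.obj.obj (ModuleCat.of R R) => g x) h }
  map_id L := BimodHom.ext rfl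
  map_comp u v := BimodHom.ext rfl

namespace EW
open MulOpposite TensorProduct

variable {S}


variable (X : BimodObj S R) (N : ModuleCat.{u} R)

noncomputable example : Module S (↥X.M ⊗[ℤ] ↥N) := inferInstance

noncomputable def trel : Submodule S (↥X.M ⊗[ℤ] ↥N) :=
  Submodule.span S {z | ∃ (m : X.M) (r : R) (n : N),
    z = (X.ρ (op r) m) ⊗ₜ[ℤ] n - m ⊗ₜ[ℤ] (r • n)}

noncomputable abbrev TObj : ModuleCat.{u} S := ModuleCat.of S ((↥X.M ⊗[ℤ] ↥N) ⧸ trel X N)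

noncomputable def tmk (m : X.M) (n : N) : TObj X N := Submodule.Quotient.mk (m ⊗ₜ[ℤ] n)

lemma tmk_add_left (m m' : X.M) (n : N) : tmk X N (m + m') n = tmk X N m n + tmk X N m' n := by
  simp [tmk, TensorProduct.add_tmul, Submodule.Quotient.mk_add]

lemma tmk_add_right (m : X.M) (n n' : N) : tmk X N m (n + n') = tmk X N m n + tmk X N m n' := by
  simp [tmk, TensorProduct.tmul_add, Submodule.Quotient.mk_add]

lemma tmk_smul (s : S) (m : X.M) (n : N) : tmk X N (s • m) n = s • tmk X N m n := by
  rw [tmk, tmk, ← Submodule.Quotient.mk_smul, TensorProduct.smul_tmul']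

lemma tmk_rel (m : X.M) (r : R) (n : N) : tmk X N (X.ρ (op r) m) n = tmk X N m (r • n) := by
  rw [tmk, tmk, Submodule.Quotient.eq]
  exact Submodule.subset_span ⟨m, r, n, rfl⟩

lemma TObj.hom_ext {P : Type u} [AddCommGroup P] [Module S P] (f g : TObj X N →ₗ[S] P)
    (h : ∀ m n, f (tmk X N m n) = g (tmk X N m n)) : f = g := by
  apply LinearMap.ext
  intro z
  obtain ⟨y, rfl⟩ := Submodule.Quotient.mk_surjective _ z
  induction y with
  | zero => simp
  | tmul m n => exact h m n
  | add a b ha hb =>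
      rw [Submodule.Quotient.mk_add, map_add, map_add, ha, hb]

variable {X N} in
noncomputable def tlift {P : Type u} [AddCommGroup P] [Module S P] (b : ↥X.M →ₗ[S] (↥N →ₗ[ℤ] P))
    (hb : ∀ (m : X.M) (r : R) (n : N), b (X.ρ (op r) m) n = b m (r • n)) :
    TObj X N →ₗ[S] P :=
  Submodule.liftQ _ (TensorProduct.AlgebraTensorModule.lift b) (by
    rw [trel, Submodule.span_le]
    rintro z ⟨m, r, n, rfl⟩
    simp [hb])

@[simp] lemma tlift_tmk {P : Type u} [AddCommGroup P] [Module S P]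
    (b : ↥X.M →ₗ[S] (↥N →ₗ[ℤ] P)) (hb) (m : X.M) (n : N) :
    tlift b hb (tmk X N m n) = b m n := rfl


variable {X N} in
noncomputable def tbil {P : Type u} [AddCommGroup P] [Module S P]
    (b : X.M → N → P)
    (h1 : ∀ m n n', b m (n + n') = b m n + b m n')
    (h2 : ∀ m m' n, b (m + m') n = b m n + b m' n)
    (h3 : ∀ (s : S) m n, b (s • m) n = s • b m n) :
    ↥X.M →ₗ[S] (↥N →ₗ[ℤ] P) where
  toFun m := (AddMonoidHom.mk' (fun n => b m n) (h1 m)).toIntLinearMap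
  map_add' m m' := by ext n; exact h2 m m' n
  map_smul' s m := by ext n; exact h3 s m n

@[simp] lemma tbil_apply {P : Type u} [AddCommGroup P] [Module S P]
    (b : X.M → N → P) (h1 h2 h3) (m : X.M) (n : N) :
    tbil b h1 h2 h3 m n = b m n := rfl

variable {N} in
noncomputable def tmap {N' : ModuleCat.{u} R} (g : N ⟶ N') : TObj X N ⟶ TObj X N' :=
  ModuleCat.ofHom <| tlift
    (tbil (fun m n => tmk X N' m (g n))
      (fun m n n' => by
        show tmk X N' m (g (n + n')) = tmk X N' m (g n) + tmk X N' m (g n')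
        rw [map_add, tmk_add_right])
      (fun m m' n => tmk_add_left X N' m m' (g n))
      (fun s m n => tmk_smul X N' s m (g n)))
    (fun m r n => by simp [tmk_rel])

@[simp] lemma tmap_tmk {N' : ModuleCat.{u} R} (g : N ⟶ N') (m : X.M) (n : N) :
    tmap X g (tmk X N m n) = tmk X N' m (g n) := rfl

noncomputable def Tfun : ModuleCat.{u} R ⥤ ModuleCat.{u} S where
  obj N := TObj X N
  map g := tmap X g
  map_id N := ModuleCat.hom_ext (TObj.hom_ext X N _ _ (fun m n => rfl))
  map_comp g h := ModuleCat.hom_ext (TObj.hom_ext X _ _ _ (fun m n => rfl))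

/-- carrier for the right adjoint -/
def GObj (P : ModuleCat.{u} S) : Type u := ↥X.M →ₗ[S] ↥P

variable {X} in
def GObj.toLin {P : ModuleCat.{u} S} (f : GObj X P) : ↥X.M →ₗ[S] ↥P := f

variable {X} in
def GObj.ofLin {P : ModuleCat.{u} S} (f : ↥X.M →ₗ[S] ↥P) : GObj X P := f

instance (P : ModuleCat.{u} S) : AddCommGroup (GObj X P) :=
  inferInstanceAs (AddCommGroup (↥X.M →ₗ[S] ↥P))

variable {X} in
lemma GObj.ext {P : ModuleCat.{u} S} {f g : GObj X P}
    (h : ∀ m, f.toLin m = g.toLin m) : f = g := LinearMap.ext h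

variable {X} in
lemma GObj.toLin_add {P : ModuleCat.{u} S} (f g : GObj X P) :
    (f + g).toLin = f.toLin + g.toLin := rfl

instance (P : ModuleCat.{u} S) : SMul R (GObj X P) :=
  ⟨fun r f => GObj.ofLin (f.toLin.comp (X.ρ (op r) : ↥X.M →ₗ[S] ↥X.M))⟩

lemma gsmul_apply (P : ModuleCat.{u} S) (r : R) (f : GObj X P) (m : X.M) :
    (r • f : GObj X P).toLin m = f.toLin (X.ρ (op r) m) := rfl

instance (P : ModuleCat.{u} S) : Module R (GObj X P) where
  one_smul f := GObj.ext fun m => by rw [gsmul_apply]; simp [map_one]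
  mul_smul r r' f := GObj.ext fun m => by
    rw [gsmul_apply, gsmul_apply, gsmul_apply]
    have : op (r * r') = op r' * op r := rfl
    rw [this, map_mul]
    rfl
  smul_zero r := GObj.ext fun m => rfl
  smul_add r f g := GObj.ext fun m => rfl
  add_smul r r' f := GObj.ext fun m => by
    rw [gsmul_apply, GObj.toLin_add]
    have : op (r + r') = op r + op r' := rfl
    rw [this, map_add]
    exact f.toLin.map_add _ _
  zero_smul f := GObj.ext fun m => by
    rw [gsmul_apply]
    have : op (0 : R) = (0 : Rᵐᵒᵖ) := rfl
    rw [this, map_zero]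
    exact f.toLin.map_zero

noncomputable def Gfun : ModuleCat.{u} S ⥤ ModuleCat.{u} R where
  obj P := ModuleCat.of R (GObj X P)
  map {P P'} h := ModuleCat.ofHom
    { toFun := fun f => GObj.ofLin (h.hom.comp f.toLin)
      map_add' := fun f g => GObj.ext fun m => map_add h.hom _ _
      map_smul' := fun r f => rfl }
  map_id P := ModuleCat.hom_ext (LinearMap.ext fun f => GObj.ext fun m => rfl)
  map_comp h h' := ModuleCat.hom_ext (LinearMap.ext fun f => GObj.ext fun m => rfl)

section Adj
variable (N : ModuleCat.{u} R) (P : ModuleCat.{u} S)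

noncomputable def toG (φ : TObj X N →ₗ[S] ↥P) : ↥N →ₗ[R] GObj X P where
  toFun n := GObj.ofLin
    { toFun := fun m => φ (tmk X N m n)
      map_add' := fun m m' => by
        show φ (tmk X N (m + m') n) = φ (tmk X N m n) + φ (tmk X N m' n)
        rw [tmk_add_left, map_add]
      map_smul' := fun s m => by
        show φ (tmk X N (s • m) n) = s • φ (tmk X N m n)
        rw [tmk_smul, map_smul] }
  map_add' n n' := GObj.ext fun m => by
    show φ (tmk X N m (n + n')) = φ (tmk X N m n) + φ (tmk X N m n')
    rw [tmk_add_right, map_add]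
  map_smul' r n := GObj.ext fun m => by
    show φ (tmk X N m (r • n)) = φ (tmk X N (X.ρ (op r) m) n)
    rw [tmk_rel]

noncomputable def ofG (ψ : ↥N →ₗ[R] GObj X P) : TObj X N →ₗ[S] ↥P :=
  tlift
    (tbil (fun m n => (ψ n).toLin m)
      (fun m n n' => by
        show (ψ (n + n')).toLin m = (ψ n).toLin m + (ψ n').toLin m
        rw [map_add]; rfl)
      (fun m m' n => (ψ n).toLin.map_add m m')
      (fun s m n => (ψ n).toLin.map_smul s m))
    (fun m r n => by
      show (ψ n).toLin (X.ρ (op r) m) = (ψ (r • n)).toLin m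
      rw [map_smul]
      rfl)

@[simp] lemma ofG_tmk (ψ : ↥N →ₗ[R] GObj X P) (m : X.M) (n : N) :
    ofG X N P ψ (tmk X N m n) = (ψ n).toLin m := rfl

@[simp] lemma toG_apply (φ : TObj X N →ₗ[S] ↥P) (n : N) (m : X.M) :
    ((toG X N P φ) n).toLin m = φ (tmk X N m n) := rfl

noncomputable def adjEquiv : (TObj X N →ₗ[S] ↥P) ≃ (↥N →ₗ[R] GObj X P) where
  toFun := toG X N P
  invFun := ofG X N P
  left_inv φ := TObj.hom_ext X N _ _ fun m n => rfl
  right_inv ψ := LinearMap.ext fun n => GObj.ext fun m => rfl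

end Adj

noncomputable def adj : Tfun X ⊣ Gfun X :=
  Adjunction.mkOfHomEquiv
    { homEquiv := fun N P =>
          ModuleCat.homEquiv.trans ((adjEquiv X N P).trans
            (ModuleCat.homEquiv (M := N) (N := (Gfun X).obj P)).symm)
      homEquiv_naturality_left_symm := fun {A B P} g ψ => by
        apply ModuleCat.hom_ext
        apply TObj.hom_ext
        intro m n
        rfl
      homEquiv_naturality_right := fun {N P P'} φ h => by
        apply ModuleCat.hom_ext
        apply LinearMap.ext
        intro n
        apply GObj.ext
        intro m
        rfl }

lemma tfun_preservesColimits : PreservesColimitsOfSize.{0, 0} (Tfun X) :=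
  (adj X).leftAdjoint_preservesColimits

lemma tfun_preservesColimits' : PreservesColimits (Tfun X) :=
  (adj X).leftAdjoint_preservesColimits

section ColimitLemma

variable {C D : Type*} [Category C] [Category D] {F G : C ⥤ D} (η : F ⟶ G)

lemma isIso_app_of_isColimit {J : Type*} [Category J] {K : J ⥤ C} {c : Cocone K}
    (hc : IsColimit c) [PreservesColimit K F] [PreservesColimit K G]
    (h : ∀ j, IsIso (η.app (K.obj j))) : IsIso (η.app c.pt) := by
  have hF := isColimitOfPreserves F hc
  have hG := isColimitOfPreserves G hc
  let d : Cocone (K ⋙ G) :=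
    { pt := F.obj c.pt
      ι :=
        { app := fun j => inv (η.app (K.obj j)) ≫ F.map (c.ι.app j)
          naturality := fun j j' f => by
            dsimp
            rw [Category.comp_id, IsIso.eq_inv_comp, ← η.naturality_assoc,
              IsIso.hom_inv_id_assoc, ← F.map_comp, c.w] } }
  refine ⟨⟨hG.desc d, ?_, ?_⟩⟩
  · apply hF.hom_ext
    intro j
    have h1 := η.naturality (c.ι.app j)
    have h2 := hG.fac d j
    dsimp at h1 h2 ⊢
    rw [Category.comp_id, ← Category.assoc, h1, Category.assoc, h2]
    simp [d]
  · apply hG.hom_ext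
    intro j
    have h1 := η.naturality (c.ι.app j)
    have h2 := hG.fac d j
    dsimp at h1
    rw [← Category.assoc, h2]
    dsimp [d]
    rw [Category.assoc, h1, IsIso.inv_hom_id_assoc]
    simp

lemma isIso_app_of_iso {A B : C} (e : A ≅ B) (h : IsIso (η.app A)) : IsIso (η.app B) := by
  have : η.app B = F.map e.inv ≫ η.app A ≫ G.map e.hom := by
    rw [← η.naturality e.hom, ← Category.assoc, ← F.map_comp, e.inv_hom_id, F.map_id,
      Category.id_comp]
  rw [this]
  infer_instance

end ColimitLemma

section Free

variable (R)

noncomputable def freeCofan (ι : Type u) : Cofan (fun _ : ι => ModuleCat.of R R) :=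
  Cofan.mk (ModuleCat.of R (ι →₀ R)) (fun i => ModuleCat.ofHom (Finsupp.lsingle i))

noncomputable def freeCofanIsColimit (ι : Type u) : IsColimit (freeCofan R ι) :=
  mkCofanColimit _
    (fun t => ModuleCat.ofHom (Finsupp.lsum ℕ (fun i => (t.inj i).hom)))
    (fun t i => by
      apply ModuleCat.hom_ext
      apply LinearMap.ext
      intro x
      show (Finsupp.lsum ℕ (fun i => (t.inj i).hom)) (Finsupp.single i x) = t.inj i x
      simp)
    (fun t m hm => by
      apply ModuleCat.hom_ext
      apply Finsupp.lhom_ext'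
      intro i
      apply LinearMap.ext
      intro x
      have := hm i
      have h2 : m (Finsupp.single i x) = t.inj i x := by
        rw [← this]; rfl
      show m (Finsupp.single i x) =
        (Finsupp.lsum ℕ (fun i => (t.inj i).hom)) (Finsupp.single i x)
      simp [h2])

end Free

section Reduce

variable {F G : ModuleCat.{u} R ⥤ ModuleCat.{u} S} (η : F ⟶ G)
  [PreservesColimitsOfSize.{u, u} F] [PreservesColimitsOfSize.{u, u} G]

lemma isIso_app_free (h : IsIso (η.app (ModuleCat.of R R))) (ι : Type u) :
    IsIso (η.app (ModuleCat.of R (ι →₀ R))) :=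
  isIso_app_of_isColimit η (freeCofanIsColimit R ι) (fun j => h)

lemma isIso_app_of_isIso_R (h : IsIso (η.app (ModuleCat.of R R))) (N : ModuleCat.{u} R) :
    IsIso (η.app N) := by
  haveI : PreservesColimitsOfSize.{0, 0} F := preservesColimitsOfSize_shrink.{0, u, 0, u} F
  haveI : PreservesColimitsOfSize.{0, 0} G := preservesColimitsOfSize_shrink.{0, u, 0, u} G
  -- free presentation
  set p : ((↥N) →₀ R) →ₗ[R] ↥N := Finsupp.linearCombination R id with hp_def
  have hp : Function.Surjective p := fun n =>
    ⟨Finsupp.single n 1, by simp [hp_def]⟩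
  set K := LinearMap.ker p with hK
  set f : ((↥K) →₀ R) →ₗ[R] ((↥N) →₀ R) := Finsupp.linearCombination R ((↑) : K → ((↥N) →₀ R))
    with hf_def
  have hrange : LinearMap.range f = K := by
    rw [hf_def, Finsupp.range_linearCombination, Subtype.range_coe, hK]
    exact Submodule.span_eq _
  -- cofork
  let fc : ModuleCat.of R ((↥K) →₀ R) ⟶ ModuleCat.of R ((↥N) →₀ R) := ModuleCat.ofHom f
  let pc : ModuleCat.of R ((↥N) →₀ R) ⟶ ModuleCat.of R (↥N) := ModuleCat.ofHom p
  have hcond : fc ≫ pc = 0 ≫ pc := by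
    rw [zero_comp]
    apply ModuleCat.hom_ext
    apply LinearMap.ext
    intro x
    have hx : f x ∈ LinearMap.range f := ⟨x, rfl⟩
    rw [hrange] at hx
    have h0 : p (f x) = 0 := hx
    simpa [fc, pc] using h0
  let c : Cofork fc 0 := Cofork.ofπ pc hcond
  let e := p.quotKerEquivOfSurjective hp
  have he : ∀ x : ((↥N) →₀ R), e (Submodule.Quotient.mk x) = p x := fun x => rfl
  have hsymm : ∀ x, e.symm (p x) = Submodule.Quotient.mk x := by
    intro x
    apply e.injective
    rw [e.apply_symm_apply, he]
  have hks : ∀ s : Cofork fc 0,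
      LinearMap.ker p ≤ LinearMap.ker s.π.hom := by
    intro s x hx
    have hx' : x ∈ LinearMap.range f := by rw [hrange]; exact hx
    obtain ⟨y, rfl⟩ := hx'
    have hs := s.condition
    rw [zero_comp] at hs
    exact congrArg (fun (t : ModuleCat.of R ((↥K) →₀ R) ⟶ s.pt) => t y) hs
  let desc : ∀ s : Cofork fc 0, c.pt ⟶ s.pt := fun s =>
    ModuleCat.ofHom
      (((LinearMap.ker p).liftQ s.π.hom (hks s)).comp
        e.symm.toLinearMap)
  have hc : IsColimit c := Cofork.IsColimit.mk c desc
    (fun s => by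
      apply ModuleCat.hom_ext
      apply LinearMap.ext
      intro x
      show ((LinearMap.ker p).liftQ s.π.hom (hks s))
        (e.symm (p x)) = s.π x
      rw [hsymm]
      rfl)
    (fun s m hm => by
      apply ModuleCat.hom_ext
      apply LinearMap.ext
      intro n
      obtain ⟨x, rfl⟩ := hp n
      have h1 : m.hom (p x) = s.π x :=
        congrArg (fun (t : ModuleCat.of R ((↥N) →₀ R) ⟶ s.pt) => t x) hm
      show m.hom (p x) = _
      rw [h1]
      show _ = ((LinearMap.ker p).liftQ s.π.hom (hks s))
        (e.symm (p x))
      rw [hsymm]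
      rfl)
  have h0 : IsIso (η.app (ModuleCat.of R ((↥K) →₀ R))) := isIso_app_free η h _
  have h1 : IsIso (η.app (ModuleCat.of R ((↥N) →₀ R))) := isIso_app_free η h _
  have hpt : IsIso (η.app c.pt) := by
    apply isIso_app_of_isColimit η hc
    intro j
    cases j
    · exact h0
    · exact h1
  exact isIso_app_of_iso η (Iso.refl N) hpt

end Reduce

section Eps

variable (N : ModuleCat.{u} R)

/-- `x ↦ x • n` as a morphism `R ⟶ N`. -/
def φm (n : N) : ModuleCat.of R R ⟶ N :=
  ModuleCat.ofHom
    { toFun := fun (x : R) => x • n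
      map_add' := fun (x y : R) => add_smul x y n
      map_smul' := fun (r x : R) => mul_smul r x n }

lemma rmul_comp_φm (r : R) (n : N) : rmulHom R r ≫ φm N n = φm N (r • n) :=
  ModuleCat.hom_ext (LinearMap.ext fun (x : R) => mul_smul x r n)

lemma φm_comp {N' : ModuleCat.{u} R} (g : N ⟶ N') (n : N) :
    φm N n ≫ g = φm N' (g n) :=
  ModuleCat.hom_ext (LinearMap.ext fun (x : R) => map_smul g.hom x n)

lemma φm_add (n n' : N) : φm N (n + n') = φm N n + φm N n' :=
  ModuleCat.hom_ext (LinearMap.ext fun (x : R) => smul_add x n n')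

lemma φm_one : φm (ModuleCat.of R R) (1 : R) = 𝟙 (ModuleCat.of R R) :=
  ModuleCat.hom_ext (LinearMap.ext fun (x : R) => mul_one x)

lemma φm_R (x : R) : φm (ModuleCat.of R R) x = rmulHom R x :=
  ModuleCat.hom_ext (LinearMap.ext fun _ => rfl)

variable (L : ModuleCat.{u} R ⥤ ModuleCat.{u} S) (hL : L.Additive)

noncomputable def epsApp : TObj (wattsObj S L hL) N ⟶ L.obj N :=
  ModuleCat.ofHom <| tlift
    (tbil (fun m n => L.map (φm N n) m)
      (fun m n n' => by
        show L.map (φm N (n + n')) m = L.map (φm N n) m + L.map (φm N n') m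
        letI := hL
        rw [φm_add, L.map_add]
        rfl)
      (fun m m' n => (L.map (φm N n)).hom.map_add m m')
      (fun s m n => (L.map (φm N n)).hom.map_smul s m))
    (fun m r n => by
      show L.map (φm N n) ((wattsObj S L hL).ρ (op r) m) = L.map (φm N (r • n)) m
      have h1 : (wattsObj S L hL).ρ (op r) m = L.map (rmulHom R r) m := rfl
      have h2 : L.map (φm N n) (L.map (rmulHom R r) m) =
          L.map (rmulHom R r ≫ φm N n) m := by rw [L.map_comp]; rfl
      rw [h1, h2, rmul_comp_φm])

@[simp] lemma epsApp_tmk (m : (wattsObj S L hL).M) (n : N) :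
    epsApp N L hL (tmk (wattsObj S L hL) N m n) = L.map (φm N n) m := rfl

noncomputable def eps : Tfun (wattsObj S L hL) ⟶ L where
  app N := epsApp N L hL
  naturality {N N'} g := by
    apply ModuleCat.hom_ext
    apply TObj.hom_ext
    intro m n
    show L.map (φm N' (g n)) m = L.map g (L.map (φm N n) m)
    have h2 : L.map g (L.map (φm N n) m) = L.map (φm N n ≫ g) m := by
      rw [L.map_comp]; rfl
    rw [h2, φm_comp]

lemma eps_app_R_isIso : IsIso ((eps L hL).app (ModuleCat.of R R)) := by
  let w : L.obj (ModuleCat.of R R) ⟶ TObj (wattsObj S L hL) (ModuleCat.of R R) :=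
    ModuleCat.ofHom
      { toFun := fun m => tmk (wattsObj S L hL) (ModuleCat.of R R) m (1 : R)
        map_add' := fun m m' => tmk_add_left (wattsObj S L hL) (ModuleCat.of R R) m m' (1 : R)
        map_smul' := fun s m => by
          dsimp only
          rw [RingHom.id_apply]
          exact tmk_smul (wattsObj S L hL) (ModuleCat.of R R) s m (1 : R) }
  refine ⟨⟨w, ?_, ?_⟩⟩
  · apply ModuleCat.hom_ext
    apply TObj.hom_ext
    intro m x
    have key : ∀ y : R,
        ((epsApp (ModuleCat.of R R) L hL : TObj (wattsObj S L hL) (ModuleCat.of R R) ⟶ _) ≫ w)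
          (tmk (wattsObj S L hL) (ModuleCat.of R R) m y) =
        (𝟙 (TObj (wattsObj S L hL) (ModuleCat.of R R)))
          (tmk (wattsObj S L hL) (ModuleCat.of R R) m y) := by
      intro y
      show tmk (wattsObj S L hL) (ModuleCat.of R R) (L.map (φm (ModuleCat.of R R) y) m) (1 : R) =
        tmk (wattsObj S L hL) (ModuleCat.of R R) m y
      rw [φm_R]
      have h2 : L.map (rmulHom R y) m = (wattsObj S L hL).ρ (op y) m := rfl
      rw [h2, tmk_rel]
      have h3 : y • (1 : R) = y := by rw [smul_eq_mul, mul_one]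
      rw [h3]
    exact key x
  · apply ModuleCat.hom_ext
    apply LinearMap.ext
    intro m
    show L.map (φm (ModuleCat.of R R) (1 : R)) m = m
    rw [φm_one, L.map_id]
    rfl

end Eps

section Unit

variable (X : BimodObj S R)

noncomputable def uApp : TObj X (ModuleCat.of R R) ⟶ X.M :=
  ModuleCat.ofHom <| tlift
    (tbil (fun m (x : R) => X.ρ (op x) m)
      (fun m (x x' : R) => by
        show X.ρ (op (x + x')) m = X.ρ (op x) m + X.ρ (op x') m
        have h0 : op (x + x') = op x + op x' := rfl
        rw [h0, map_add]
        rfl)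
      (fun m m' (x : R) => (X.ρ (op x)).map_add m m')
      (fun s m (x : R) => (X.ρ (op x)).map_smul s m))
    (fun m r (x : R) => by
      show X.ρ (op x) (X.ρ (op r) m) = X.ρ (op ((r • x : R))) m
      have h1 : op ((r • x : R)) = op x * op r := by
        rw [smul_eq_mul]; rfl
      rw [h1, map_mul]
      rfl)

@[simp] lemma uApp_tmk (m : X.M) (x : R) :
    uApp X (tmk X (ModuleCat.of R R) m x) = X.ρ (op x) m := rfl

noncomputable def uInv : X.M ⟶ TObj X (ModuleCat.of R R) :=
  ModuleCat.ofHom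
    { toFun := fun m => tmk X (ModuleCat.of R R) m (1 : R)
      map_add' := fun m m' => tmk_add_left X (ModuleCat.of R R) m m' (1 : R)
      map_smul' := fun s m => by
        dsimp only
        rw [RingHom.id_apply]
        exact tmk_smul X (ModuleCat.of R R) s m (1 : R) }

lemma uApp_uInv : uApp X ≫ uInv X = 𝟙 (TObj X (ModuleCat.of R R)) := by
  apply ModuleCat.hom_ext
  apply TObj.hom_ext
  intro m x
  have key : ∀ y : R,
      (uApp X ≫ uInv X) (tmk X (ModuleCat.of R R) m y) =
      (𝟙 (TObj X (ModuleCat.of R R))) (tmk X (ModuleCat.of R R) m y) := by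
    intro y
    show tmk X (ModuleCat.of R R) (X.ρ (op y) m) (1 : R) = tmk X (ModuleCat.of R R) m y
    rw [tmk_rel]
    have h3 : y • (1 : R) = y := by rw [smul_eq_mul, mul_one]
    rw [h3]
  exact key x

lemma uInv_uApp : uInv X ≫ uApp X = 𝟙 X.M := by
  apply ModuleCat.hom_ext
  apply LinearMap.ext
  intro m
  show X.ρ (op (1 : R)) m = m
  have h0 : op (1 : R) = (1 : Rᵐᵒᵖ) := rfl
  rw [h0, map_one]
  rfl

end Unit

section TBim

noncomputable def tauApp {X X' : BimodObj S R} (g : X ⟶ X') (N : ModuleCat.{u} R) :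
    TObj X N ⟶ TObj X' N :=
  ModuleCat.ofHom <| tlift
    (tbil (fun m n => tmk X' N (g.f m) n)
      (fun m n n' => by
        show tmk X' N (g.f m) (n + n') = _
        rw [tmk_add_right])
      (fun m m' n => by
        show tmk X' N (g.f (m + m')) n = _
        rw [map_add, tmk_add_left])
      (fun s m n => by
        show tmk X' N (g.f (s • m)) n = s • tmk X' N (g.f m) n
        rw [map_smul, tmk_smul]))
    (fun m r n => by
      show tmk X' N (g.f (X.ρ (op r) m)) n = tmk X' N (g.f m) (r • n)
      rw [g.comm, tmk_rel])

@[simp] lemma tauApp_tmk {X X' : BimodObj S R} (g : X ⟶ X') (N : ModuleCat.{u} R)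
    (m : X.M) (n : N) :
    tauApp g N (tmk X N m n) = tmk X' N (g.f m) n := rfl

noncomputable def TBim : BimodObj S R ⥤ WattsDom S R where
  obj X := ⟨Tfun X, tfun_preservesColimits' X⟩
  map {X X'} g :=
    ObjectProperty.homMk
    { app := fun N => tauApp g N
      naturality := fun N N' h => by
        apply ModuleCat.hom_ext
        apply TObj.hom_ext
        intro m n
        rfl }
  map_id X := by
    apply ObjectProperty.hom_ext
    apply NatTrans.ext
    funext N
    apply ModuleCat.hom_ext
    apply TObj.hom_ext
    intro m n
    rfl
  map_comp g g' := by
    apply ObjectProperty.hom_ext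
    apply NatTrans.ext
    funext N
    apply ModuleCat.hom_ext
    apply TObj.hom_ext
    intro m n
    rfl

end TBim

section Equiv

variable (hadd : ∀ L : WattsDom S R, L.obj.Additive)

lemma eps_isIso (L : WattsDom S R) : IsIso (eps L.obj (hadd L)) := by
  haveI := L.property
  haveI := tfun_preservesColimits' (wattsObj S L.obj (hadd L))
  haveI : ∀ N, IsIso ((eps L.obj (hadd L)).app N) := fun N =>
    isIso_app_of_isIso_R (eps L.obj (hadd L)) (eps_app_R_isIso L.obj (hadd L)) N
  exact NatIso.isIso_of_isIso_app _

noncomputable def epsIsoW (L : WattsDom S R) :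
    (TBim.obj ((wattsFunctor S hadd).obj L) : WattsDom S R) ≅ L := by
  haveI : IsIso (eps L.obj (hadd L)) := eps_isIso hadd L
  let e : Tfun (wattsObj S L.obj (hadd L)) ≅ L.obj := asIso (eps L.obj (hadd L))
  exact ObjectProperty.isoMk _ e

lemma eps_natural {L L' : WattsDom S R} (ν : L ⟶ L') :
    (wattsFunctor S hadd ⋙ TBim).map ν ≫ (epsIsoW hadd L').hom =
      (epsIsoW hadd L).hom ≫ ν := by
  apply ObjectProperty.hom_ext
  apply NatTrans.ext
  funext N
  apply ModuleCat.hom_ext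
  apply TObj.hom_ext
  intro m n
  show L'.obj.map (φm N n) (ν.hom.app (ModuleCat.of R R) m) = ν.hom.app N (L.obj.map (φm N n) m)
  exact (congrArg (fun (t : L.obj.obj (ModuleCat.of R R) ⟶ L'.obj.obj N) => t m)
    (ν.hom.naturality (φm N n))).symm

noncomputable def unitIso : 𝟭 (WattsDom S R) ≅ wattsFunctor S hadd ⋙ TBim :=
  NatIso.ofComponents (fun L => (epsIsoW hadd L).symm) (by
    intro L L' ν
    show ν ≫ (epsIsoW hadd L').inv = (epsIsoW hadd L).inv ≫ (wattsFunctor S hadd ⋙ TBim).map ν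
    rw [Iso.comp_inv_eq, Category.assoc, eps_natural hadd ν, Iso.inv_hom_id_assoc])

noncomputable def counitComponent (X : BimodObj S R) :
    ((wattsFunctor S hadd).obj (TBim.obj X) : BimodObj S R) ≅ X where
  hom :=
    { f := uApp X
      comm := by
        intro r z
        have hcomp :
            (ModuleCat.ofHom (((wattsObj S (Tfun X) (hadd (TBim.obj X))).ρ r :
                Module.End S (TObj X (ModuleCat.of R R)))) ≫ uApp X) =
              uApp X ≫ ModuleCat.ofHom (X.ρ r : Module.End S X.M) := by
          apply ModuleCat.hom_ext
          apply TObj.hom_ext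
          intro m x
          have key : ∀ y : R,
              (ModuleCat.ofHom (((wattsObj S (Tfun X) (hadd (TBim.obj X))).ρ r :
                  Module.End S (TObj X (ModuleCat.of R R)))) ≫ uApp X)
                (tmk X (ModuleCat.of R R) m y) =
              (uApp X ≫ ModuleCat.ofHom (X.ρ r : Module.End S X.M))
                (tmk X (ModuleCat.of R R) m y) := by
            intro y
            show X.ρ (op (y * r.unop)) m = X.ρ r (X.ρ (op y) m)
            have h1 : op (y * r.unop) = r * op y := by
              rw [← op_unop r, unop_op, ← op_mul]
            rw [h1, map_mul]
            rfl
          exact key x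
        exact congrArg (fun (t : TObj X (ModuleCat.of R R) ⟶ X.M) => t z) hcomp }
  inv :=
    { f := uInv X
      comm := by
        intro r m
        show tmk X (ModuleCat.of R R) (X.ρ r m) (1 : R) =
          tmk X (ModuleCat.of R R) m ((1 : R) * r.unop)
        have h1 : X.ρ r m = X.ρ (op r.unop) m := by rw [op_unop]
        rw [h1, tmk_rel]
        congr 1
        show r.unop • (1 : R) = (1 : R) * r.unop
        rw [smul_eq_mul, mul_one, one_mul] }
  hom_inv_id := BimodHom.ext (uApp_uInv X)
  inv_hom_id := BimodHom.ext (uInv_uApp X)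

noncomputable def counitIso : TBim ⋙ wattsFunctor S hadd ≅ 𝟭 (BimodObj S R) :=
  NatIso.ofComponents (fun X => counitComponent hadd X) (by
    intro X X' g
    apply BimodHom.ext
    apply ModuleCat.hom_ext
    apply TObj.hom_ext
    intro m x
    show X'.ρ (op x) (g.f m) = g.f (X.ρ (op x) m)
    rw [g.comm])

end Equiv

end EW

/-- **generalized Eilenberg–Watts theorem.**  Let `R` and `S` be rings.  Every
colimit-preserving functor `L : ModuleCat R ⥤ ModuleCat S` is additive, and the functor
sending such an `L` to the `(S,R)`-bimodule `L(R)` — with right `R`-action in which `r` acts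
as `L` applied to right multiplication by `r` — is an equivalence from the full subcategory
of colimit-preserving functors `ModuleCat R ⥤ ModuleCat S` onto the category of
`(S,R)`-bimodules. -/
theorem stmt_5 (S R : Type u) [Ring S] [Ring R] :
    ∃ hadd : ∀ L : WattsDom S R, L.obj.Additive,
      (wattsFunctor S hadd).IsEquivalence := by
  have hadd : ∀ L : WattsDom S R, L.obj.Additive := fun L => by
    haveI := L.property
    haveI : PreservesColimitsOfSize.{0, 0} L.obj :=
      preservesColimitsOfSize_shrink.{0, u, 0, u} L.obj
    haveI := preservesBinaryBiproducts_of_preservesBinaryCoproducts L.obj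
    exact Functor.additive_of_preservesBinaryBiproducts L.obj
  refine ⟨hadd, ?_⟩
  exact (CategoryTheory.Equivalence.mk (wattsFunctor S hadd) EW.TBim
    (EW.unitIso hadd) (EW.counitIso hadd)).isEquivalence_functor
end

section
/- Let T be a small category with finite products and C a cocomplete category. The full subcategory of the functor category T^op ⥤ C consisting of functors preserving finite coproducts is closed under all small colimits (computed pointwise in the functor category); in particular, the category Coalg(T, C) of internal T-coalgebras in C is cocomplete and its colimits are created by the inclusion into the functor category. -/
universe u u₂

open CategoryTheory Limits Opposite

section Aux

variable {T : Type u} [SmallCategory T]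
  {C : Type u₂} [Category.{u} C] [HasColimits C]

lemma aux_colimit_preserves {J : Type u} [SmallCategory J] (K : J ⥤ (Tᵒᵖ ⥤ C))
    (hK : ∀ j, PreservesFiniteCoproducts (K.obj j)) :
    PreservesFiniteCoproducts (colimit K) := by
  constructor
  intro ι
  have : PreservesColimitsOfShape (Discrete (Fin ι)) K.flip := by
    apply preservesColimitsOfShape_of_evaluation
    intro j
    exact preservesColimitsOfShape_of_natIso (flipCompEvaluation K j).symm
  exact preservesColimitsOfShape_of_natIso (colimitIsoFlipCompColim K).symm

end Aux

/-- Let `T` be a small category with finite products and `C` a cocomplete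
category.  The full subcategory of `Tᵒᵖ ⥤ C` consisting of the finite-coproduct-preserving
functors is closed under all small colimits (computed pointwise in the functor category): the
colimit of any small diagram of finite-coproduct-preserving functors again preserves finite
coproducts.  In particular the category `Coalg (T, C)` of internal `T`-coalgebras in `C` is
cocomplete, and its colimits are created by the inclusion into the functor category. -/
theorem stmt_6 (T : Type u) [SmallCategory T] [HasFiniteProducts T]
    (C : Type u₂) [Category.{u} C] [HasColimits C] :
    (∀ (J : Type u) [SmallCategory J] (K : J ⥤ (Tᵒᵖ ⥤ C)),
      (∀ j, PreservesFiniteCoproducts (K.obj j)) →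
        PreservesFiniteCoproducts (colimit K)) ∧
    HasColimits (ObjectProperty.FullSubcategory (fun A : Tᵒᵖ ⥤ C => PreservesFiniteCoproducts A)) ∧
    Nonempty (CreatesColimitsOfSize.{u, u}
      (ObjectProperty.ι (fun A : Tᵒᵖ ⥤ C => PreservesFiniteCoproducts A))) := by
  have closed : ∀ (J : Type u) [SmallCategory J],
      ObjectProperty.IsClosedUnderColimitsOfShape (fun A : Tᵒᵖ ⥤ C => PreservesFiniteCoproducts A) J := by
    intro J _
    have : ObjectProperty.IsClosedUnderIsomorphisms (fun A : Tᵒᵖ ⥤ C => PreservesFiniteCoproducts A) := by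
      constructor
      intro A B e hA
      exact ⟨fun ι => preservesColimitsOfShape_of_natIso e⟩
    apply ObjectProperty.IsClosedUnderColimitsOfShape.mk'
    rintro _ ⟨K, hK⟩
    exact aux_colimit_preserves K hK
  refine ⟨fun J _ K hK => aux_colimit_preserves K hK, ?_, ?_⟩
  · constructor
    intro J _
    haveI := closed J; infer_instance
  · exact ⟨⟨fun {J} _ => by haveI := closed J; infer_instance⟩⟩
end

section
/- Let T be a small category with finite products. For every sifted small category J and every diagram D : J ⥤ (T ⥤ Type) such that each functor D(j) : T ⥤ Type preserves finite products, the colimit of D in the functor category T ⥤ Type also preserves finite products. That is, the category of T-algebras is closed under sifted colimits in the functor category T ⥤ Type. -/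
universe u

open CategoryTheory Limits Opposite

namespace Stmt12Aux

open CategoryTheory.Functor

variable {J : Type u} [SmallCategory J]

/-- The external product of two `Type`-valued functors. -/
@[simps, reducible]
def extProd (F G : J ⥤ Type u) : J × J ⥤ Type u where
  obj p := F.obj p.1 × G.obj p.2
  map f := TypeCat.ofHom (fun x : F.obj _ × G.obj _ => (F.map f.1 x.1, G.map f.2 x.2))
  map_id p := by ext x <;> simp [TypeCat.Fun.toFun_apply]
  map_comp f g := by ext x <;> simp [TypeCat.Fun.toFun_apply]

/-- The cocone used to define `fwd`. -/
noncomputable def fwdCocone (F G : J ⥤ Type u) : Cocone (extProd F G) where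
  pt := (colimit F × colimit G : Type u)
  ι :=
    { app := fun p => TypeCat.ofHom (fun x : F.obj p.1 × G.obj p.2 => (colimit.ι F p.1 x.1, colimit.ι G p.2 x.2))
      naturality := by
        intro p q f
        ext x
        have h1 := ConcreteCategory.congr_hom (colimit.w F f.1) x.1
        have h2 := ConcreteCategory.congr_hom (colimit.w G f.2) x.2
        simp only [types_comp_apply] at h1 h2
        dsimp
        rw [h1, h2] }

/-- The canonical map `colimit (extProd F G) ⟶ colimit F × colimit G`. -/
noncomputable def fwd (F G : J ⥤ Type u) :
    colimit (extProd F G) ⟶ (colimit F × colimit G : Type u) :=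
  colimit.desc (extProd F G) (fwdCocone F G)

@[simp]
lemma fwd_ι (F G : J ⥤ Type u) (p : J × J) (x : (extProd F G).obj p) :
    fwd F G (colimit.ι (extProd F G) p x) = (colimit.ι F p.1 x.1, colimit.ι G p.2 x.2) := by
  exact ConcreteCategory.congr_hom (colimit.ι_desc (fwdCocone F G) p) x

/-- Auxiliary map for `bwd`. -/
noncomputable def bwdAux (F G : J ⥤ Type u) (jx : Σ j, F.obj j) :
    G.ColimitType → colimit (extProd F G) :=
  Quot.lift (fun ky : Σ k, G.obj k => colimit.ι (extProd F G) (jx.1, ky.1) (jx.2, ky.2))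
    (by
      rintro p q ⟨g, hg⟩
      dsimp
      rw [hg]
      have := ConcreteCategory.congr_hom (colimit.w (extProd F G)
        ((𝟙 jx.1, g) : ((jx.1, p.1) : J × J) ⟶ (jx.1, q.1))) ((jx.2, p.2) : F.obj jx.1 × G.obj p.1)
      simp only [types_comp_apply] at this
      rw [← this]
      simp)

/-- The inverse map `Types.Quot F → Types.Quot G → colimit (extProd F G)`. -/
noncomputable def bwd₂ (F G : J ⥤ Type u) (qa : F.ColimitType) (qb : G.ColimitType) :
    colimit (extProd F G) :=
  Quot.lift (fun jx => bwdAux F G jx qb)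
    (by
      rintro p q ⟨f, hf⟩
      induction qb using Quot.ind with
      | mk ky =>
        show colimit.ι (extProd F G) (p.1, ky.1) (p.2, ky.2) =
          colimit.ι (extProd F G) (q.1, ky.1) (q.2, ky.2)
        rw [hf]
        have := ConcreteCategory.congr_hom (colimit.w (extProd F G)
          ((f, 𝟙 ky.1) : ((p.1, ky.1) : J × J) ⟶ (q.1, ky.1))) ((p.2, ky.2) : F.obj p.1 × G.obj ky.1)
        simp only [types_comp_apply] at this
        rw [← this]
        simp)
    qa

/-- The inverse map `colimit F × colimit G → colimit (extProd F G)`. -/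
noncomputable def bwd (F G : J ⥤ Type u) (a : colimit F) (b : colimit G) :
    colimit (extProd F G) :=
  bwd₂ F G (Types.colimitEquivColimitType F a) (Types.colimitEquivColimitType G b)

@[simp]
lemma bwd_ι (F G : J ⥤ Type u) (j k : J) (x : F.obj j) (y : G.obj k) :
    bwd F G (colimit.ι F j x) (colimit.ι G k y) = colimit.ι (extProd F G) (j, k) (x, y) := by
  unfold bwd
  rw [Types.colimitEquivColimitType_apply, Types.colimitEquivColimitType_apply]
  rfl

lemma fwd_bijective (F G : J ⥤ Type u) : Function.Bijective (fwd F G) := by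
  have hinv₁ : ∀ z, bwd F G (fwd F G z).1 (fwd F G z).2 = z := by
    intro z
    obtain ⟨p, x, rfl⟩ := Types.jointly_surjective' z
    rw [fwd_ι]
    exact bwd_ι F G p.1 p.2 x.1 x.2
  have hinv₂ : ∀ ab : colimit F × colimit G, fwd F G (bwd F G ab.1 ab.2) = ab := by
    rintro ⟨a, b⟩
    obtain ⟨j, x, rfl⟩ := Types.jointly_surjective' a
    obtain ⟨k, y, rfl⟩ := Types.jointly_surjective' b
    rw [bwd_ι]
    exact fwd_ι F G (j, k) (x, y)
  constructor
  · intro z z' hz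
    rw [← hinv₁ z, ← hinv₁ z', hz]
  · intro ab
    exact ⟨bwd F G ab.1 ab.2, hinv₂ ab⟩

section Sifted

variable [IsSifted J]

/-- The pointwise product of two `Type`-valued functors. -/
noncomputable abbrev ptProd (F G : J ⥤ Type u) : J ⥤ Type u := diag J ⋙ extProd F G

/-- First projection out of the pointwise product. -/
@[simps]
def ptFst (F G : J ⥤ Type u) : ptProd F G ⟶ F where
  app j := TypeCat.ofHom _root_.Prod.fst

/-- Second projection out of the pointwise product. -/
@[simps]
def ptSnd (F G : J ⥤ Type u) : ptProd F G ⟶ G where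
  app j := TypeCat.ofHom _root_.Prod.snd

/-- The pointwise product fan is a limit binary fan in the functor category. -/
noncomputable def ptProdIsLimit (F G : J ⥤ Type u) :
    IsLimit (BinaryFan.mk (ptFst F G) (ptSnd F G)) :=
  BinaryFan.isLimitMk
    (fun s =>
      { app := fun j => TypeCat.ofHom (fun x => (s.fst.app j x, s.snd.app j x))
        naturality := by
          intro j j' f
          ext x
          have h1 : s.fst.app j' (s.pt.map f x) = F.map f (s.fst.app j x) :=
            ConcreteCategory.congr_hom (s.fst.naturality f) x
          have h2 : s.snd.app j' (s.pt.map f x) = G.map f (s.snd.app j x) :=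
            ConcreteCategory.congr_hom (s.snd.naturality f) x
          dsimp
          exact Prod.ext h1 h2 })
    (fun s => rfl) (fun s => rfl)
    (fun s m h₁ h₂ => by
      ext j x
      have e₁ := ConcreteCategory.congr_hom (congrArg (fun (t : s.pt ⟶ F) => t.app j) h₁) x
      have e₂ := ConcreteCategory.congr_hom (congrArg (fun (t : s.pt ⟶ G) => t.app j) h₂) x
      dsimp at e₁ e₂ ⊢
      exact Prod.ext e₁ e₂)

/-- The key computation: `colim` maps the pointwise-product fan to the canonical comparison. -/
lemma psi_eq (F G : J ⥤ Type u) (z : colimit (ptProd F G)) :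
    (colim.map (ptFst F G) z, colim.map (ptSnd F G) z) =
      fwd F G ((Functor.Final.colimitIso (diag J) (extProd F G)).hom z) := by
  obtain ⟨j, x, rfl⟩ := Types.jointly_surjective' z
  have h₁ : (Functor.Final.colimitIso (diag J) (extProd F G)).hom
      (colimit.ι (ptProd F G) j x) = colimit.ι (extProd F G) (j, j) x :=
    ConcreteCategory.congr_hom (Functor.Final.ι_colimitIso_hom (diag J) (extProd F G) j) x
  have h₂ : colim.map (ptFst F G) (colimit.ι (ptProd F G) j x) = colimit.ι F j x.1 :=
    ConcreteCategory.congr_hom (ι_colimMap (ptFst F G) j) x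
  have h₃ : colim.map (ptSnd F G) (colimit.ι (ptProd F G) j x) = colimit.ι G j x.2 :=
    ConcreteCategory.congr_hom (ι_colimMap (ptSnd F G) j) x
  rw [h₁, h₂, h₃, fwd_ι]

/-- The canonical comparison `ψ` is bijective. -/
lemma psi_bijective (F G : J ⥤ Type u) :
    Function.Bijective (fun z => (colim.map (ptFst F G) z, colim.map (ptSnd F G) z) :
      colimit (ptProd F G) → colimit F × colimit G) := by
  have h : (fun z => (colim.map (ptFst F G) z, colim.map (ptSnd F G) z) :
      colimit (ptProd F G) → colimit F × colimit G) =
      (fwd F G) ∘ (Functor.Final.colimitIso (diag J) (extProd F G)).hom :=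
    funext (psi_eq F G)
  rw [h]
  exact (fwd_bijective F G).comp ((isIso_iff_bijective _).mp inferInstance)

/-- `colim : (J ⥤ Type u) ⥤ Type u` preserves binary products when `J` is sifted. -/
noncomputable instance colimPreservesBinaryProducts :
    PreservesLimitsOfShape (Discrete WalkingPair) (colim : (J ⥤ Type u) ⥤ Type u) := by
  constructor
  intro K
  set F := K.obj ⟨WalkingPair.left⟩
  set G := K.obj ⟨WalkingPair.right⟩
  haveI : PreservesLimit (pair F G) (colim : (J ⥤ Type u) ⥤ Type u) := by
    apply preservesLimit_of_preserves_limit_cone (ptProdIsLimit F G)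
    refine (isLimitMapConeBinaryFanEquiv colim (ptFst F G) (ptSnd F G)).symm ?_
    letI ψ := Equiv.ofBijective _ (psi_bijective F G)
    refine IsLimit.ofIsoLimit (Types.binaryProductLimit (colimit F) (colimit G))
      (Cones.ext ψ.symm.toIso ?_)
    rintro ⟨⟨⟩⟩
    · ext z
      have h := ψ.apply_symm_apply z
      exact (congrArg Prod.fst h).symm
    · ext z
      have h := ψ.apply_symm_apply z
      exact (congrArg Prod.snd h).symm
  exact preservesLimit_of_iso_diagram colim (diagramIsoPair K).symm

/-- `colim : (J ⥤ Type u) ⥤ Type u` preserves the terminal object when `J` is sifted. -/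
noncomputable instance colimPreservesTerminal :
    PreservesLimit (Functor.empty.{0} (J ⥤ Type u)) (colim : (J ⥤ Type u) ⥤ Type u) := by
  have hterm : IsTerminal (Types.constPUnitFunctor.{u} J) :=
    IsTerminal.ofUniqueHom (fun Y => { app := fun j => TypeCat.ofHom (fun _ => PUnit.unit) })
      (fun Y m => by ext j x; rfl)
  refine preservesTerminal_of_iso colim ?_
  exact colim.mapIso (terminalIsoIsTerminal hterm) ≪≫
    Types.colimitConstPUnitIsoPUnit.{u} J ≪≫ Types.terminalIso.symm

/-- `colim : (J ⥤ Type u) ⥤ Type u` preserves finite products when `J` is sifted. -/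
noncomputable instance colimPreservesFiniteProducts :
    PreservesFiniteProducts (colim : (J ⥤ Type u) ⥤ Type u) := by
  haveI := preservesLimitsOfShape_pempty_of_preservesTerminal
    (colim : (J ⥤ Type u) ⥤ Type u)
  exact PreservesFiniteProducts.of_preserves_binary_and_terminal colim

end Sifted

end Stmt12Aux

/-- Let `T` be a small category with finite products.  For every sifted
small category `J` and every diagram `D : J ⥤ (T ⥤ Type)` such that each `D.obj j` preserves
finite products, the colimit of `D` in the functor category `T ⥤ Type` also preserves finite
products.  That is, the category of `T`-algebras is closed under sifted colimits in the
functor category `T ⥤ Type`. -/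
theorem stmt_12 (T : Type u) [SmallCategory T] [HasFiniteProducts T]
    (J : Type u) [SmallCategory J] [IsSifted J] (D : J ⥤ (T ⥤ Type u))
    (h : ∀ j, PreservesFiniteProducts (D.obj j)) :
    PreservesFiniteProducts (colimit D) := by
  haveI : PreservesFiniteProducts D.flip := by
    constructor
    intro α
    apply preservesLimitsOfShape_of_evaluation
    intro j
    haveI := (h j).preserves α
    exact preservesLimitsOfShape_of_natIso (flipCompEvaluation D j).symm
  haveI : PreservesFiniteProducts (D.flip ⋙ colim) := inferInstance
  exact ⟨fun α => preservesLimitsOfShape_of_natIso (colimitIsoFlipCompColim D).symm⟩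
end

section
/- Fix n : ℕ. The functor from the category of commutative rings to the category of groups sending a commutative ring R to the general linear group GL(n, R) of invertible n × n matrices over R, and sending a ring homomorphism f : R → R' to the group homomorphism induced by applying f entrywise, has a left adjoint. -/
universe u

open CategoryTheory

/-- The general linear group functor `CommRingCat ⥤ Grp`, sending a commutative ring `R` to
`GL (Fin n) R` and a ring homomorphism to the group homomorphism obtained by applying it
entrywise. -/
def GLFunctor (n : ℕ) : CommRingCat.{u} ⥤ GrpCat.{u} where
  obj R := GrpCat.of (Matrix.GeneralLinearGroup (Fin n) R)
  map f := GrpCat.ofHom (Matrix.GeneralLinearGroup.map f.hom)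

section Aux

open CategoryTheory.Limits

/-- Ring homomorphisms out of `ULift ℤ` are unique, like those out of `ℤ`. -/
lemma uliftIntHom_ext {R : Type*} [Ring R] (f g : ULift.{u} ℤ →+* R) : f = g := by
  have h : f.comp ((ULift.ringEquiv : ULift.{u} ℤ ≃+* ℤ).symm.toRingHom)
      = g.comp ((ULift.ringEquiv : ULift.{u} ℤ ≃+* ℤ).symm.toRingHom) := Subsingleton.elim _ _
  ext x
  have hx := DFunLike.congr_fun h x.down
  cases x
  exact hx

/-- Ring homomorphisms out of a polynomial ring over `ULift ℤ` are determined by their values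
on the variables. -/
lemma mvULiftIntHom_ext {σ : Type*} {R : Type*} [CommRing R]
    (f g : MvPolynomial σ (ULift.{u} ℤ) →+* R)
    (h : ∀ s, f (MvPolynomial.X s) = g (MvPolynomial.X s)) : f = g := by
  apply MvPolynomial.ringHom_ext
  · intro r
    exact DFunLike.congr_fun
      (uliftIntHom_ext (f.comp MvPolynomial.C) (g.comp MvPolynomial.C)) r
  · exact h

/-- The matrix monoid functor `CommRingCat ⥤ MonCat`. -/
def MatFunctor (n : ℕ) : CommRingCat.{u} ⥤ MonCat.{u} where
  obj R := MonCat.of (Matrix (Fin n) (Fin n) R)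
  map f := MonCat.ofHom (RingHom.mapMatrix f.hom).toMonoidHom
  map_id _ := MonCat.hom_ext (MonoidHom.ext fun _ => Matrix.ext fun _ _ => rfl)
  map_comp _ _ := MonCat.hom_ext (MonoidHom.ext fun _ => Matrix.ext fun _ _ => rfl)

/-- Auxiliary computation for `matCorep`. -/
lemma matCorep_left {n : ℕ} {R : Type u} [CommRing R]
    (π : MvPolynomial (Fin n × Fin n) (ULift.{u} ℤ) →+* R) :
    MvPolynomial.eval₂Hom
      ((Int.castRingHom R).comp (ULift.ringEquiv : ULift.{u} ℤ ≃+* ℤ).toRingHom)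
      (fun p : Fin n × Fin n =>
        (Matrix.of fun i j => π (MvPolynomial.X (i, j))) p.1 p.2) = π := by
  apply mvULiftIntHom_ext
  intro s
  exact MvPolynomial.eval₂Hom_X' _ _ _

/-- `MatFunctor n ⋙ forget MonCat` is corepresented by the polynomial ring on `n × n`
variables over `ℤ`. -/
noncomputable def matCorep (n : ℕ) :
    (MatFunctor.{u} n ⋙ forget MonCat).CorepresentableBy
      (CommRingCat.of (MvPolynomial (Fin n × Fin n) (ULift.{u} ℤ))) where
  homEquiv {R} :=
    { toFun := fun π => (Matrix.of fun i j => π (MvPolynomial.X (i, j)) :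
          Matrix (Fin n) (Fin n) R)
      invFun := fun M => CommRingCat.ofHom (MvPolynomial.eval₂Hom
        ((Int.castRingHom R).comp (ULift.ringEquiv : ULift.{u} ℤ ≃+* ℤ).toRingHom)
        (fun p => (M : Matrix (Fin n) (Fin n) R) p.1 p.2))
      left_inv := fun π => CommRingCat.hom_ext (matCorep_left π.hom)
      right_inv := fun M => Matrix.ext fun i j => MvPolynomial.eval₂Hom_X' _ _ _ }
  homEquiv_comp g f := Matrix.ext fun i j => rfl

instance (n : ℕ) : (MatFunctor.{u} n ⋙ forget MonCat).IsCorepresentable :=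
  (matCorep n).isCorepresentable

noncomputable instance (n : ℕ) : PreservesLimits (MatFunctor.{u} n) :=
  have : ReflectsLimits (forget MonCat.{u}) := reflectsLimits_of_reflectsIsomorphisms
  preservesLimits_of_reflects_of_preserves (MatFunctor.{u} n) (forget MonCat)

/-- The GL functor is the composition of the matrix monoid functor with the units functor. -/
def GLFunctorIso (n : ℕ) : GLFunctor.{u} n ≅ MatFunctor.{u} n ⋙ MonCat.units :=
  NatIso.ofComponents (fun R => Iso.refl _) (fun f => by
    ext M
    exact Units.ext rfl)

noncomputable instance (n : ℕ) : PreservesLimits (GLFunctor.{u} n) :=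
  preservesLimits_of_natIso (GLFunctorIso n).symm

/-- A polynomial ring with a variable for each entry of the image of each element of `A`,
and each entry of the inverse of that image. -/
abbrev GLPoly (n : ℕ) (A : GrpCat.{u}) : Type u :=
  MvPolynomial (↥A × (Fin n × Fin n) × Bool) (ULift.{u} ℤ)

/-- The evaluation homomorphism associated to a group homomorphism `A ⟶ GL n X`. -/
noncomputable def glEval {n : ℕ} {A : GrpCat.{u}} {X : CommRingCat.{u}}
    (hm : (↥A) →* Matrix.GeneralLinearGroup (Fin n) (↥X)) : GLPoly n A →+* X :=
  MvPolynomial.eval₂Hom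
    ((Int.castRingHom X).comp (ULift.ringEquiv : ULift.{u} ℤ ≃+* ℤ).toRingHom)
    (fun p => if p.2.2 then ((hm p.1)⁻¹).val p.2.1.1 p.2.1.2
      else (hm p.1).val p.2.1.1 p.2.1.2)

lemma mapMatrix_injective {n : ℕ} {R S : Type u} [CommRing R] [CommRing S] {ψ : R →+* S}
    (hψ : Function.Injective ψ) :
    Function.Injective (ψ.mapMatrix : Matrix (Fin n) (Fin n) R →+* Matrix (Fin n) (Fin n) S) := by
  intro M N hMN
  ext i j
  exact hψ (congrFun (congrFun hMN i) j)

end Aux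

/-- For each `n : ℕ`, the functor from commutative rings to groups sending
`R` to the general linear group `GL (Fin n) R` (with entrywise functoriality) has a left
adjoint. -/
theorem stmt_16 (n : ℕ) : (GLFunctor.{u} n).IsRightAdjoint := by
  apply isRightAdjoint_of_preservesLimits_of_solutionSetCondition
  intro A
  refine ⟨Σ I : Ideal (GLPoly n A),
      (A ⟶ (GLFunctor.{u} n).obj (CommRingCat.of (GLPoly n A ⧸ I))),
    fun i => CommRingCat.of (GLPoly n A ⧸ i.1), fun i => i.2, ?_⟩
  intro X h
  set hm : (↥A) →* Matrix.GeneralLinearGroup (Fin n) (↥X) := h.hom with hhm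
  set φ : GLPoly n A →+* X := glEval hm with hφ
  set I : Ideal (GLPoly n A) := RingHom.ker φ with hI
  set ψ : GLPoly n A ⧸ I →+* X := RingHom.kerLift φ with hψ
  have ψinj : Function.Injective ψ := RingHom.kerLift_injective φ
  have ψMinj : Function.Injective
      (ψ.mapMatrix : Matrix (Fin n) (Fin n) (GLPoly n A ⧸ I) →+* Matrix (Fin n) (Fin n) X) :=
    mapMatrix_injective (R := GLPoly n A ⧸ I) (S := X) ψinj
  -- the candidate matrices over the quotient ring
  set M : A → Matrix (Fin n) (Fin n) (GLPoly n A ⧸ I) := fun a =>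
    Matrix.of fun i j => Ideal.Quotient.mk I (MvPolynomial.X ⟨a, (i, j), false⟩) with hM
  set N : A → Matrix (Fin n) (Fin n) (GLPoly n A ⧸ I) := fun a =>
    Matrix.of fun i j => Ideal.Quotient.mk I (MvPolynomial.X ⟨a, (i, j), true⟩) with hN
  have hMψ : ∀ a, ψ.mapMatrix (M a) = (hm a).val := by
    intro a
    ext i j
    show ψ (Ideal.Quotient.mk I (MvPolynomial.X ⟨a, (i, j), false⟩)) = _
    rw [hψ, RingHom.kerLift_mk, hφ]
    rw [glEval, MvPolynomial.eval₂Hom_X']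
    simp
  have hNψ : ∀ a, ψ.mapMatrix (N a) = ((hm a)⁻¹).val := by
    intro a
    ext i j
    show ψ (Ideal.Quotient.mk I (MvPolynomial.X ⟨a, (i, j), true⟩)) = _
    rw [hψ, RingHom.kerLift_mk, hφ]
    rw [glEval, MvPolynomial.eval₂Hom_X']
    simp
  have hMN : ∀ a, M a * N a = 1 := by
    intro a
    apply ψMinj
    rw [map_mul ψ.mapMatrix (M a) (N a), map_one ψ.mapMatrix, hMψ, hNψ]
    exact Units.mul_inv _
  have hNM : ∀ a, N a * M a = 1 := by
    intro a
    apply ψMinj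
    rw [map_mul ψ.mapMatrix (N a) (M a), map_one ψ.mapMatrix, hMψ, hNψ]
    exact Units.inv_mul _
  refine ⟨⟨I, GrpCat.ofHom
      { toFun := fun a => (⟨M a, N a, hMN a, hNM a⟩ :
          Matrix.GeneralLinearGroup (Fin n) (GLPoly n A ⧸ I))
        map_one' := by
          apply Units.ext
          apply ψMinj
          show ψ.mapMatrix (M 1) = ψ.mapMatrix 1
          rw [hMψ 1, map_one hm, Units.val_one, map_one ψ.mapMatrix]
        map_mul' := fun a b => by
          apply Units.ext
          apply ψMinj
          show ψ.mapMatrix (M (a * b)) = ψ.mapMatrix (M a * M b)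
          rw [map_mul ψ.mapMatrix (M a) (M b), hMψ, hMψ, hMψ, map_mul hm a b,
            Units.val_mul] }⟩,
    (CommRingCat.ofHom ψ : CommRingCat.of (GLPoly n A ⧸ I) ⟶ X), ?_⟩
  apply GrpCat.hom_ext
  apply MonoidHom.ext
  intro a
  apply Units.ext
  show ψ.mapMatrix (M a) = (hm a).val
  exact hMψ a
end
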